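/- arXiv:2301.00317 — 4 statements merged into one kernel-verified Lean document; each statement's English description precedes it below -/
import Mathlib

section
/- Let D_{1,n,s} (n, s ≥ 1) be the tree obtained from a path on n vertices by attaching one leaf at one end and s leaves at the other end. For k ∈ {2,3}, TS_k(D_{1,n,s}) contains a cycle C_4 if n ≥ 2k − 1, and otherwise TS_k(D_{1,n,s}) is acyclic. -/
open SimpleGraph

/-- `I` is a size-`k` independent set of `G`: a vertex of the token sliding graph. -/
def TSVert {W : Type*} (G : SimpleGraph W) (k : ℕ) (I : Finset W) : Prop :=
  I.card = k ∧ ∀ u ∈ I, ∀ v ∈ I, ¬ G.Adj u v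

/-- The token sliding graph `TS_k(G)`: vertices are size-`k` independent sets of `G`,
two sets adjacent iff they differ by sliding one token along an edge of `G`. -/
def TS {W : Type*} (G : SimpleGraph W) (k : ℕ) :
    SimpleGraph {I : Finset W // TSVert G k I} :=
  SimpleGraph.fromRel fun I J =>
    ∃ u v, ((I : Finset W) : Set W) \ ((J : Finset W) : Set W) = {u} ∧
      ((J : Finset W) : Set W) \ ((I : Finset W) : Set W) = {v} ∧ G.Adj u v

/-- `2K₂`: two disjoint edges, `0-1` and `2-3`. -/
def twoK2 : SimpleGraph (Fin 4) :=
  SimpleGraph.fromRel fun a b => (a = 0 ∧ b = 1) ∨ (a = 2 ∧ b = 3)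

/-- Disjoint union of two simple graphs. -/
def disjUnion' {α β : Type*} (G : SimpleGraph α) (H : SimpleGraph β) :
    SimpleGraph (α ⊕ β) :=
  SimpleGraph.fromRel fun a b =>
    (∃ x y, a = Sum.inl x ∧ b = Sum.inl y ∧ G.Adj x y) ∨
    (∃ x y, a = Sum.inr x ∧ b = Sum.inr y ∧ H.Adj x y)

/-- `nK₁`: `n` isolated vertices. -/
def nK1 (n : ℕ) : SimpleGraph (Fin n) := ⊥

/-- `D r n s`: the tree obtained from the path on `n` vertices by appending `r` leaves
at one endpoint and `s` leaves at the other endpoint. -/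
def D (r n s : ℕ) : SimpleGraph (Fin r ⊕ Fin n ⊕ Fin s) :=
  SimpleGraph.fromRel fun a b =>
    (∃ i j : Fin n, a = Sum.inr (Sum.inl i) ∧ b = Sum.inr (Sum.inl j) ∧ (j : ℕ) = (i : ℕ) + 1) ∨
    (∃ (u : Fin r) (i : Fin n), a = Sum.inl u ∧ b = Sum.inr (Sum.inl i) ∧ (i : ℕ) = 0) ∨
    (∃ (v : Fin s) (i : Fin n), a = Sum.inr (Sum.inr v) ∧ b = Sum.inr (Sum.inl i) ∧ (i : ℕ) = n - 1)

/-- The star `K_{1,s}`: center `0` with `s` leaves. -/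
def star' (s : ℕ) : SimpleGraph (Fin (s + 1)) :=
  SimpleGraph.fromRel fun a _ => a = 0

/-- `G` contains a cycle of length `n`. -/
def HasCycleLen {α : Type*} (G : SimpleGraph α) (n : ℕ) : Prop :=
  ∃ (v : α) (w : G.Walk v v), w.IsCycle ∧ w.length = n

/-- `G` contains a cycle. -/
def HasCycle {α : Type*} (G : SimpleGraph α) : Prop :=
  ∃ (v : α) (w : G.Walk v v), w.IsCycle
open SimpleGraph

lemma cycle_aux {V : Type*} {G : SimpleGraph V} (μ : V → ℕ)
    (hA : ∀ u v, G.Adj u v → μ u ≠ μ v)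
    (hB : ∀ u v w, G.Adj u v → G.Adj u w → μ v < μ u → μ w < μ u → v = w)
    {u : V} (c : G.Walk u u) (hc : c.IsCycle) (hmax : ∀ x ∈ c.support, μ x ≤ μ u) : False := by
  cases c with
  | nil => exact Walk.IsCycle.not_of_nil hc
  | @cons _ b _ h p =>
    obtain ⟨x, q, h', hcq⟩ := Walk.exists_cons_eq_concat h p
    have hbu : μ b < μ u := by
      refine lt_of_le_of_ne (hmax b ?_) fun e => hA u b h e.symm
      simp [Walk.support_cons]
    have hxu : μ x < μ u := by
      refine lt_of_le_of_ne (hmax x ?_) fun e => hA u x h'.symm e.symm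
      have : (Walk.cons h p).support = q.support.concat u := by
        rw [hcq, Walk.support_concat, List.concat_eq_append]
      rw [this, List.concat_eq_append]
      exact List.mem_append_left _ q.end_mem_support
    have hbx : b = x := hB u b x h h'.symm hbu hxu
    subst hbx
    have hqnil : ¬ q.Nil := Walk.not_nil_of_ne (h'.symm.ne)
    have hqe : q.edges ≠ [] := by
      intro he
      have : q.length = 0 := by simpa using congrArg List.length he
      exact hqnil (Walk.nil_iff_length_eq.2 this)
    have hedges : Walk.edges (Walk.cons h p) = q.edges ++ [s(b, u)] := by
      rw [hcq, Walk.edges_concat, List.concat_eq_append]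
    have hpe : p.edges = q.edges.tail ++ [s(b, u)] := by
      have h2 : s(u, b) :: p.edges = q.edges ++ [s(b, u)] := by
        simpa [Walk.edges_cons] using hedges
      have := congrArg List.tail h2
      simpa [List.tail_append_of_ne_nil hqe] using this
    have hmem : s(u, b) ∈ p.edges := by
      rw [hpe, Sym2.eq_swap]
      exact List.mem_append_right _ (by simp)
    have htrail : (Walk.cons h p).IsTrail := hc.isCircuit.isTrail
    rw [Walk.isTrail_cons] at htrail
    exact htrail.2 hmem

lemma acyclic_of_measure {V : Type*} (G : SimpleGraph V) (μ : V → ℕ)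
    (hA : ∀ u v, G.Adj u v → μ u ≠ μ v)
    (hB : ∀ u v w, G.Adj u v → G.Adj u w → μ v < μ u → μ w < μ u → v = w) :
    G.IsAcyclic := by
  intro v c hc
  classical
  obtain ⟨u, hu, hmax⟩ : ∃ u ∈ c.support, ∀ x ∈ c.support, μ x ≤ μ u := by
    obtain ⟨u, hu, hmax⟩ := c.support.toFinset.exists_max_image μ
      ⟨v, by simp [Walk.start_mem_support]⟩
    exact ⟨u, by simpa using hu, fun x hx => hmax x (by simpa using hx)⟩
  have hc' := hc.rotate hu
  refine cycle_aux μ hA hB (c.rotate _ hu) hc' fun x hx => hmax x ?_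
  have hperm := c.support_rotate _ hu
  have : x = u ∨ x ∈ (c.rotate _ hu).support.tail := by
    rw [(c.rotate _ hu).support_eq_cons] at hx
    simpa only [List.mem_cons] using hx
  rcases this with rfl | hx'
  · exact hu
  · exact List.mem_of_mem_tail (hperm.mem_iff.mp hx')

section TSlemmas

variable {W : Type*} [DecidableEq W] {G : SimpleGraph W} {k : ℕ}

lemma diff_erase {I J : Finset W} {u v : W}
    (h1 : (↑I \ ↑J : Set W) = {u}) (h2 : (↑J \ ↑I : Set W) = {v}) :
    I.erase u = J.erase v := by
  have hu : u ∈ I ∧ u ∉ J := by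
    have : u ∈ (↑I \ ↑J : Set W) := h1 ▸ Set.mem_singleton u
    simpa using this
  have hv : v ∈ J ∧ v ∉ I := by
    have : v ∈ (↑J \ ↑I : Set W) := h2 ▸ Set.mem_singleton v
    simpa using this
  ext x
  simp only [Finset.mem_erase]
  constructor
  · rintro ⟨hxu, hxI⟩
    have hxJ : x ∈ J := by
      by_contra hxJ
      have : x ∈ (↑I \ ↑J : Set W) := by simp [hxI, hxJ]
      rw [h1] at this
      exact hxu (by simpa using this)
    exact ⟨fun e => hv.2 (e ▸ hxI), hxJ⟩
  · rintro ⟨hxv, hxJ⟩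
    have hxI : x ∈ I := by
      by_contra hxI
      have : x ∈ (↑J \ ↑I : Set W) := by simp [hxJ, hxI]
      rw [h2] at this
      exact hxv (by simpa using this)
    exact ⟨fun e => hu.2 (e ▸ hxJ), hxI⟩

lemma slide_facts {I J : {I : Finset W // TSVert G k I}} (h : (TS G k).Adj I J) (w : W → ℕ) :
    ∃ u v, G.Adj u v ∧ u ∈ I.1 ∧ v ∉ I.1 ∧ v ∈ J.1 ∧
      (∀ x ∈ I.1, x ≠ u → ¬ G.Adj x v) ∧
      (∑ x ∈ I.1, w x) + w v = (∑ x ∈ J.1, w x) + w u ∧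
      J.1 = insert v (I.1.erase u) := by
  have core : ∀ u v, ((I.1 : Set W) \ (J.1 : Set W)) = {u} →
      ((J.1 : Set W) \ (I.1 : Set W)) = {v} → G.Adj u v →
      ∃ u v, G.Adj u v ∧ u ∈ I.1 ∧ v ∉ I.1 ∧ v ∈ J.1 ∧
      (∀ x ∈ I.1, x ≠ u → ¬ G.Adj x v) ∧
      (∑ x ∈ I.1, w x) + w v = (∑ x ∈ J.1, w x) + w u ∧
      J.1 = insert v (I.1.erase u) := by
    intro u v h1 h2 huv
    have hu : u ∈ I.1 ∧ u ∉ J.1 := by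
      have : u ∈ (↑I.1 \ ↑J.1 : Set W) := h1 ▸ Set.mem_singleton u
      simpa using this
    have hv : v ∈ J.1 ∧ v ∉ I.1 := by
      have : v ∈ (↑J.1 \ ↑I.1 : Set W) := h2 ▸ Set.mem_singleton v
      simpa using this
    have her : I.1.erase u = J.1.erase v := diff_erase h1 h2
    have hJ : J.1 = insert v (I.1.erase u) := by
      rw [her, Finset.insert_erase hv.1]
    refine ⟨u, v, huv, hu.1, hv.2, hv.1, ?_, ?_, hJ⟩
    · intro x hx hxu
      have hxJ : x ∈ J.1 := by
        have : x ∈ I.1.erase u := Finset.mem_erase.2 ⟨hxu, hx⟩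
        rw [her] at this
        exact Finset.mem_of_mem_erase this
      exact J.2.2 x hxJ v hv.1
    · rw [← Finset.add_sum_erase _ w hu.1, ← Finset.add_sum_erase _ w hv.1, her]
      ring
  rw [TS, SimpleGraph.fromRel_adj] at h
  obtain ⟨hne, h | h⟩ := h
  · obtain ⟨u, v, h1, h2, huv⟩ := h
    exact core u v h1 h2 huv
  · obtain ⟨v, u, h2, h1, hvu⟩ := h
    exact core u v h1 h2 hvu.symm

lemma ts_adj_intro (I J : {I : Finset W // TSVert G k I}) (u v : W)
    (huv : G.Adj u v) (hu : u ∈ I.1) (hv : v ∉ I.1)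
    (hJ : J.1 = insert v (I.1.erase u)) : (TS G k).Adj I J := by
  have hne : u ≠ v := huv.ne
  have huJ : u ∉ J.1 := by
    rw [hJ]
    simp [hne, Finset.mem_erase]
  rw [TS, SimpleGraph.fromRel_adj]
  refine ⟨fun e => huJ (e ▸ hu), Or.inl ⟨u, v, ?_, ?_, huv⟩⟩
  · ext x
    simp only [Set.mem_diff, Finset.mem_coe, Set.mem_singleton_iff]
    constructor
    · rintro ⟨hxI, hxJ⟩
      by_contra hxu
      exact hxJ (by rw [hJ]; simp [Finset.mem_erase, hxu, hxI])
    · rintro rfl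
      exact ⟨hu, huJ⟩
  · ext x
    simp only [Set.mem_diff, Finset.mem_coe, Set.mem_singleton_iff]
    constructor
    · rintro ⟨hxJ, hxI⟩
      rw [hJ] at hxJ
      rcases Finset.mem_insert.1 hxJ with rfl | hx
      · rfl
      · exact absurd (Finset.mem_of_mem_erase hx) hxI
    · rintro rfl
      refine ⟨by rw [hJ]; simp, hv⟩

end TSlemmas

section Dlemmas

variable {n s : ℕ}

/-- the extra leaf -/
abbrev vA (n s : ℕ) : Fin 1 ⊕ Fin n ⊕ Fin s := Sum.inl 0

/-- path vertices -/
abbrev vP (n s : ℕ) (i : Fin n) : Fin 1 ⊕ Fin n ⊕ Fin s := Sum.inr (Sum.inl i)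

/-- the s leaves -/
abbrev vB (n s : ℕ) (x : Fin s) : Fin 1 ⊕ Fin n ⊕ Fin s := Sum.inr (Sum.inr x)

lemma D_adj_iff (u v : Fin 1 ⊕ Fin n ⊕ Fin s) :
    (D 1 n s).Adj u v ↔
      ((∃ i j : Fin n, u = vP n s i ∧ v = vP n s j ∧
          ((i : ℕ) + 1 = (j : ℕ) ∨ (j : ℕ) + 1 = (i : ℕ))) ∨
       (∃ i : Fin n, (i : ℕ) = 0 ∧
          ((u = vA n s ∧ v = vP n s i) ∨ (u = vP n s i ∧ v = vA n s))) ∨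
       (∃ (x : Fin s) (i : Fin n), (i : ℕ) = n - 1 ∧
          ((u = vB n s x ∧ v = vP n s i) ∨ (u = vP n s i ∧ v = vB n s x)))) := by
  rw [D, SimpleGraph.fromRel_adj]
  constructor
  · rintro ⟨hne, h | h⟩
    · rcases h with ⟨i, j, rfl, rfl, hij⟩ | ⟨a, i, rfl, rfl, hi⟩ | ⟨x, i, rfl, rfl, hi⟩
      · exact Or.inl ⟨i, j, rfl, rfl, Or.inl hij.symm⟩
      · have : a = 0 := Subsingleton.elim _ _
        subst this
        exact Or.inr (Or.inl ⟨i, hi, Or.inl ⟨rfl, rfl⟩⟩)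
      · exact Or.inr (Or.inr ⟨x, i, hi, Or.inl ⟨rfl, rfl⟩⟩)
    · rcases h with ⟨i, j, rfl, rfl, hij⟩ | ⟨a, i, rfl, rfl, hi⟩ | ⟨x, i, rfl, rfl, hi⟩
      · exact Or.inl ⟨j, i, rfl, rfl, Or.inr hij.symm⟩
      · have : a = 0 := Subsingleton.elim _ _
        subst this
        exact Or.inr (Or.inl ⟨i, hi, Or.inr ⟨rfl, rfl⟩⟩)
      · exact Or.inr (Or.inr ⟨x, i, hi, Or.inr ⟨rfl, rfl⟩⟩)
  · rintro (⟨i, j, rfl, rfl, hij | hij⟩ | ⟨i, hi, ⟨rfl, rfl⟩ | ⟨rfl, rfl⟩⟩ |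
      ⟨x, i, hi, ⟨rfl, rfl⟩ | ⟨rfl, rfl⟩⟩)
    · refine ⟨?_, Or.inl (Or.inl ⟨i, j, rfl, rfl, hij.symm⟩)⟩
      simp only [vP, ne_eq, Sum.inr.injEq, Sum.inl.injEq]
      intro h
      subst h
      omega
    · refine ⟨?_, Or.inr (Or.inl ⟨j, i, rfl, rfl, hij.symm⟩)⟩
      simp only [vP, ne_eq, Sum.inr.injEq, Sum.inl.injEq]
      intro h
      subst h
      omega
    · exact ⟨by simp [vA, vP], Or.inl (Or.inr (Or.inl ⟨0, i, rfl, rfl, hi⟩))⟩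
    · exact ⟨by simp [vA, vP], Or.inr (Or.inr (Or.inl ⟨0, i, rfl, rfl, hi⟩))⟩
    · exact ⟨by simp [vB, vP], Or.inl (Or.inr (Or.inr ⟨x, i, rfl, rfl, hi⟩))⟩
    · exact ⟨by simp [vB, vP], Or.inr (Or.inr (Or.inr ⟨x, i, rfl, rfl, hi⟩))⟩

lemma D_adj_PP {i j : Fin n} (h : (i : ℕ) + 1 = (j : ℕ) ∨ (j : ℕ) + 1 = (i : ℕ)) :
    (D 1 n s).Adj (vP n s i) (vP n s j) :=
  (D_adj_iff _ _).2 (Or.inl ⟨i, j, rfl, rfl, h⟩)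

lemma D_adj_AP {i : Fin n} (h : (i : ℕ) = 0) : (D 1 n s).Adj (vA n s) (vP n s i) :=
  (D_adj_iff _ _).2 (Or.inr (Or.inl ⟨i, h, Or.inl ⟨rfl, rfl⟩⟩))

lemma D_adj_BP {x : Fin s} {i : Fin n} (h : (i : ℕ) = n - 1) :
    (D 1 n s).Adj (vB n s x) (vP n s i) :=
  (D_adj_iff _ _).2 (Or.inr (Or.inr ⟨x, i, h, Or.inl ⟨rfl, rfl⟩⟩))

/-- weight for the acyclicity measure -/
def wt (n s : ℕ) : Fin 1 ⊕ Fin n ⊕ Fin s → ℕ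
  | .inl _ => 1
  | .inr (.inl i) => if (i : ℕ) = n - 1 then 0 else (i : ℕ) + 2
  | .inr (.inr _) => 1

lemma wt_A : wt n s (vA n s) = 1 := rfl
lemma wt_B (x : Fin s) : wt n s (vB n s x) = 1 := rfl
lemma wt_P (i : Fin n) : wt n s (vP n s i) = if (i : ℕ) = n - 1 then 0 else (i : ℕ) + 2 := rfl

lemma wt_ne {u v : Fin 1 ⊕ Fin n ⊕ Fin s} (h : (D 1 n s).Adj u v) :
    wt n s u ≠ wt n s v := by
  rw [D_adj_iff] at h
  rcases h with ⟨i, j, rfl, rfl, hij⟩ | ⟨i, hi, ⟨rfl, rfl⟩ | ⟨rfl, rfl⟩⟩ |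
      ⟨x, i, hi, ⟨rfl, rfl⟩ | ⟨rfl, rfl⟩⟩
  · have h1 := i.isLt; have h2 := j.isLt; rw [wt_P, wt_P]; split_ifs <;> omega
  · have h1 := i.isLt; rw [wt_A, wt_P]; split_ifs <;> omega
  · have h1 := i.isLt; rw [wt_P, wt_A]; split_ifs <;> omega
  · have h1 := i.isLt; rw [wt_B, wt_P]; split_ifs <;> omega
  · have h1 := i.isLt; rw [wt_P, wt_B]; split_ifs <;> omega

lemma downhill {u v : Fin 1 ⊕ Fin n ⊕ Fin s} (h : (D 1 n s).Adj u v)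
    (hw : wt n s v < wt n s u) :
    (2 ≤ n ∧ ∃ i : Fin n, (i : ℕ) = 0 ∧ u = vP n s i ∧ v = vA n s) ∨
    (∃ i j : Fin n, u = vP n s i ∧ v = vP n s j ∧ (j : ℕ) + 1 = (i : ℕ) ∧ (i : ℕ) ≤ n - 2) ∨
    (2 ≤ n ∧ ∃ i j : Fin n, u = vP n s i ∧ v = vP n s j ∧ (i : ℕ) + 1 = (j : ℕ) ∧
      (j : ℕ) = n - 1) ∨
    (∃ (x : Fin s) (i : Fin n), u = vB n s x ∧ v = vP n s i ∧ (i : ℕ) = n - 1) ∨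
    (n = 1 ∧ ∃ i : Fin n, u = vA n s ∧ v = vP n s i) := by
  rw [D_adj_iff] at h
  rcases h with ⟨i, j, rfl, rfl, hij | hij⟩ | ⟨i, hi, ⟨rfl, rfl⟩ | ⟨rfl, rfl⟩⟩ |
      ⟨x, i, hi, ⟨rfl, rfl⟩ | ⟨rfl, rfl⟩⟩
  · -- i+1 = j : right shift, downhill iff j = n-1
    have hj := j.isLt
    have hi' := i.isLt
    rw [wt_P, wt_P] at hw
    refine Or.inr (Or.inr (Or.inl ⟨by omega, i, j, rfl, rfl, hij, ?_⟩))
    by_contra hjn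
    have e2 : ¬((i : ℕ) = n - 1) := by omega
    rw [if_neg hjn, if_neg e2] at hw
    omega
  · -- j+1 = i : left shift, downhill iff i ≤ n-2
    have hj := j.isLt
    have hi' := i.isLt
    rw [wt_P, wt_P] at hw
    refine Or.inr (Or.inl ⟨i, j, rfl, rfl, hij, ?_⟩)
    by_contra hin
    have e1 : (i : ℕ) = n - 1 := by omega
    have e2 : ¬((j : ℕ) = n - 1) := by omega
    rw [if_pos e1, if_neg e2] at hw
    omega
  · -- a → p0 : downhill iff n = 1
    have hi' := i.isLt
    rw [wt_A, wt_P] at hw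
    refine Or.inr (Or.inr (Or.inr (Or.inr ⟨?_, i, rfl, rfl⟩)))
    by_contra hn1
    have e2 : ¬((i : ℕ) = n - 1) := by omega
    rw [if_neg e2] at hw
    omega
  · -- p0 → a : downhill iff 2 ≤ n
    have hi' := i.isLt
    rw [wt_A, wt_P] at hw
    refine Or.inl ⟨?_, i, hi, rfl, rfl⟩
    by_contra hn1
    have e2 : (i : ℕ) = n - 1 := by omega
    rw [if_pos e2] at hw
    omega
  · -- b → p(n-1): always downhill
    exact Or.inr (Or.inr (Or.inr (Or.inl ⟨x, i, rfl, rfl, hi⟩)))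
  · -- p(n-1) → b : uphill, contradiction
    rw [wt_B, wt_P, if_pos hi] at hw
    omega

end Dlemmas

section Helpers

variable {n s : ℕ}

lemma vP_eq {i j : Fin n} (h : (i : ℕ) = (j : ℕ)) : vP n s i = vP n s j := by
  rw [Fin.val_injective h]

lemma vP_ne {i j : Fin n} (h : (i : ℕ) ≠ (j : ℕ)) : vP n s i ≠ vP n s j := fun e =>
  h (congrArg Fin.val (by simpa [vP] using e : i = j))

lemma vA_ne_vP (i : Fin n) : vA n s ≠ vP n s i := by simp [vA, vP]

lemma vA_ne_vB (x : Fin s) : vA n s ≠ vB n s x := by simp [vA, vB]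

lemma vB_ne_vP (x : Fin s) (i : Fin n) : vB n s x ≠ vP n s i := by simp [vB, vP]

lemma vB_ne {x y : Fin s} (h : x ≠ y) : vB n s x ≠ vB n s y := fun e =>
  h (by simpa [vB] using e : x = y)

lemma inl_eq_vA (a : Fin 1) : (Sum.inl a : Fin 1 ⊕ Fin n ⊕ Fin s) = vA n s := by
  rw [Fin.fin_one_eq_zero a]

end Helpers

section N1

lemma n1_no_adj (s k : ℕ) (hk : 2 ≤ k)
    (I J : {I : Finset (Fin 1 ⊕ Fin 1 ⊕ Fin s) // TSVert (D 1 1 s) k I}) :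
    ¬ (TS (D 1 1 s) k).Adj I J := by
  intro h
  obtain ⟨u, v, hadj, hu, hv, hvJ, hval, -, -⟩ := slide_facts h (wt 1 s)
  have hcard := I.2.1
  have hind := I.2.2
  -- scenario A : u is the path vertex p0
  have scA : ∀ i : Fin 1, u = vP 1 s i → False := by
    intro i hui
    obtain ⟨t, ht, htu⟩ := Finset.exists_mem_ne (by omega : 1 < I.1.card) u
    subst hui
    rcases t with a | m | y
    · exact hind _ ht _ hu ((inl_eq_vA a) ▸ D_adj_AP (by omega))
    · exact htu (by rw [Subsingleton.elim m i])
    · exact hind _ ht _ hu (D_adj_BP (by omega))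
  -- scenario B : v is the path vertex p0
  have scB : ∀ i : Fin 1, v = vP 1 s i → False := by
    intro i hvi
    obtain ⟨t, ht, htu⟩ := Finset.exists_mem_ne (by omega : 1 < I.1.card) u
    subst hvi
    rcases t with a | m | y
    · exact hval _ ht htu ((inl_eq_vA a) ▸ D_adj_AP (by omega))
    · exact hv (by rw [← vP_eq (Subsingleton.elim (m : Fin 1) i ▸ rfl : (m:ℕ) = (i:ℕ))]; exact ht)
    · exact hval _ ht htu (D_adj_BP (by omega))
  rw [D_adj_iff] at hadj
  rcases hadj with ⟨i, j, rfl, rfl, hij⟩ | ⟨i, hi, ⟨rfl, rfl⟩ | ⟨rfl, rfl⟩⟩ |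
      ⟨x, i, hi, ⟨rfl, rfl⟩ | ⟨rfl, rfl⟩⟩
  · have := i.isLt; have := j.isLt; omega
  · exact scB i rfl
  · exact scA i rfl
  · exact scB i rfl
  · exact scA i rfl

lemma acyclic_n1 (s k : ℕ) (hk : 2 ≤ k) : (TS (D 1 1 s) k).IsAcyclic := by
  intro v c hc
  cases c with
  | nil => exact Walk.IsCycle.not_of_nil hc
  | cons h p => exact n1_no_adj s k hk _ _ h

end N1

lemma hB_gen (n s k : ℕ) (hn : 2 ≤ n) (hn4 : n ≤ 4) (hk2 : 2 ≤ k) (hk3 : 3 ≤ n → 3 ≤ k)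
    (I J1 J2 : {I : Finset (Fin 1 ⊕ Fin n ⊕ Fin s) // TSVert (D 1 n s) k I})
    (h1 : (TS (D 1 n s) k).Adj I J1) (h2 : (TS (D 1 n s) k).Adj I J2)
    (hl1 : ∑ x ∈ J1.1, wt n s x < ∑ x ∈ I.1, wt n s x)
    (hl2 : ∑ x ∈ J2.1, wt n s x < ∑ x ∈ I.1, wt n s x) : J1 = J2 := by
  obtain ⟨u1, v1, hadj1, hu1, hv1, hvJ1, hval1, hsum1, hJ1⟩ := slide_facts h1 (wt n s)
  obtain ⟨u2, v2, hadj2, hu2, hv2, hvJ2, hval2, hsum2, hJ2⟩ := slide_facts h2 (wt n s)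
  have hd1 : wt n s v1 < wt n s u1 := by omega
  have hd2 : wt n s v2 < wt n s u2 := by omega
  have hcard := I.2.1
  have hind := I.2.2
  have hfin : u1 = u2 → v1 = v2 → J1 = J2 := by
    intro e1 e2; exact Subtype.ext (by rw [hJ1, hJ2, e1, e2])
  have hsmall2 : ∀ c1 c2 : Fin 1 ⊕ Fin n ⊕ Fin s, I.1 ⊆ {c1, c2} → 3 ≤ k → False := by
    intro c1 c2 hsub hk'
    have hc1 := Finset.card_le_card hsub
    have hc2 : ({c1, c2} : Finset _).card ≤ 2 :=
      le_trans (Finset.card_insert_le _ _) (by simp)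
    omega
  have hsmall1 : ∀ c1 : Fin 1 ⊕ Fin n ⊕ Fin s, I.1 ⊆ {c1} → False := by
    intro c1 hsub
    have hc1 := Finset.card_le_card hsub
    simp only [Finset.card_singleton] at hc1
    omega
  rcases downhill hadj1 hd1 with ⟨-, i1, hi1, hU1, hV1⟩ | ⟨i1, j1, hU1, hV1, hij1, hle1⟩ |
    ⟨-, i1, j1, hU1, hV1, hij1, hje1⟩ | ⟨x1, i1, hU1, hV1, hie1⟩ | ⟨hn1, -⟩
  -- ================= move 1 is M1 : p0 → a =================
  · subst hU1; subst hV1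
    have hL1 := i1.isLt
    rcases downhill hadj2 hd2 with ⟨-, i2, hi2, hU2, hV2⟩ | ⟨i2, j2, hU2, hV2, hij2, hle2⟩ |
      ⟨-, i2, j2, hU2, hV2, hij2, hje2⟩ | ⟨x2, i2, hU2, hV2, hie2⟩ | ⟨hn1, -⟩
    · -- (M1,M1)
      subst hU2; subst hV2
      exact hfin (vP_eq (by omega)) rfl
    · -- (M1,M2)
      subst hU2; subst hV2
      have hL2 := i2.isLt; have hLj2 := j2.isLt
      have hne12 : (i2 : ℕ) ≠ 1 := fun e =>
        hind _ hu1 _ hu2 (D_adj_PP (Or.inl (by omega)))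
      exact absurd (D_adj_PP (Or.inl (by omega))) (hval2 _ hu1 (vP_ne (by omega)))
    · -- (M1,M3)
      subst hU2; subst hV2
      have hL2 := i2.isLt; have hLj2 := j2.isLt
      by_cases hn2 : n = 2
      · -- same u ; I ⊆ {p0}
        refine (hsmall1 (vP n s i1) ?_).elim
        intro t ht
        rcases t with a | m | y
        · exact absurd (by rw [← inl_eq_vA a]; exact ht) hv1
        · have hLm := m.isLt
          simp only [Finset.mem_singleton]
          by_cases hm2 : (m : ℕ) = (j2 : ℕ)
          · exact absurd (by rw [← vP_eq hm2]; exact ht) hv2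
          · exact vP_eq (by omega)
        · exact absurd (D_adj_BP (by omega)) (hval2 _ ht (vB_ne_vP _ _))
      · have hne12 : (i2 : ℕ) ≠ 1 := fun e =>
          hind _ hu1 _ hu2 (D_adj_PP (Or.inl (by omega)))
        refine (hsmall2 (vP n s i1) (vP n s i2) ?_ (hk3 (by omega))).elim
        intro t ht
        rcases t with a | m | y
        · exact absurd (by rw [← inl_eq_vA a]; exact ht) hv1
        · have hLm := m.isLt
          simp only [Finset.mem_insert, Finset.mem_singleton]
          by_cases hm0 : (m : ℕ) = (i1 : ℕ)
          · exact Or.inl (vP_eq hm0)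
          by_cases hm2 : (m : ℕ) = (i2 : ℕ)
          · exact Or.inr (vP_eq hm2)
          by_cases hmj : (m : ℕ) = (j2 : ℕ)
          · exact absurd (by rw [← vP_eq hmj]; exact ht) hv2
          · exact absurd (D_adj_PP (Or.inr (by omega))) (hind _ ht _ hu1)
        · exact absurd (D_adj_BP (by omega)) (hval2 _ ht (vB_ne_vP _ _))
    · -- (M1,M4)
      subst hU2; subst hV2
      have hL2 := i2.isLt
      have hne12 : (i2 : ℕ) ≠ 1 := fun e =>
        hval2 _ hu1 (Ne.symm (vB_ne_vP _ _)) (D_adj_PP (Or.inl (by omega)))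
      refine (hsmall2 (vP n s i1) (vB n s x2) ?_ (hk3 (by omega))).elim
      intro t ht
      rcases t with a | m | y
      · exact absurd (by rw [← inl_eq_vA a]; exact ht) hv1
      · have hLm := m.isLt
        simp only [Finset.mem_insert, Finset.mem_singleton]
        by_cases hm0 : (m : ℕ) = (i1 : ℕ)
        · exact Or.inl (vP_eq hm0)
        by_cases hmv : (m : ℕ) = (i2 : ℕ)
        · exact absurd (by rw [← vP_eq hmv]; exact ht) hv2
        by_cases hm2 : (m : ℕ) = n - 2
        · exact absurd (D_adj_PP (Or.inl (by omega))) (hval2 _ ht (Ne.symm (vB_ne_vP _ _)))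
        · exact absurd (D_adj_PP (Or.inr (by omega))) (hind _ ht _ hu1)
      · simp only [Finset.mem_insert, Finset.mem_singleton]
        by_cases hxy : y = x2
        · exact Or.inr (by rw [hxy])
        · exact absurd (D_adj_BP (by omega)) (hval2 _ ht (vB_ne hxy))
    · exact absurd hn1 (by omega)
  -- ================= move 1 is M2 : left shift =================
  · subst hU1; subst hV1
    have hL1 := i1.isLt; have hLj1 := j1.isLt
    rcases downhill hadj2 hd2 with ⟨-, i2, hi2, hU2, hV2⟩ | ⟨i2, j2, hU2, hV2, hij2, hle2⟩ |
      ⟨-, i2, j2, hU2, hV2, hij2, hje2⟩ | ⟨x2, i2, hU2, hV2, hie2⟩ | ⟨hn1, -⟩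
    · -- (M2,M1)
      subst hU2; subst hV2
      have hL2 := i2.isLt
      have hne12 : (i1 : ℕ) ≠ 1 := fun e =>
        hind _ hu2 _ hu1 (D_adj_PP (Or.inl (by omega)))
      exact absurd (D_adj_PP (Or.inl (by omega))) (hval1 _ hu2 (vP_ne (by omega)))
    · -- (M2,M2)
      subst hU2; subst hV2
      have hL2 := i2.isLt; have hLj2 := j2.isLt
      by_cases he : (i1 : ℕ) = (i2 : ℕ)
      · exact hfin (vP_eq he) (vP_eq (by omega))
      · exact absurd (D_adj_PP (by omega)) (hind _ hu1 _ hu2)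
    · -- (M2,M3)
      subst hU2; subst hV2
      have hL2 := i2.isLt; have hLj2 := j2.isLt
      by_cases he : (i1 : ℕ) = (i2 : ℕ)
      · -- same u : I ⊆ {u, vA}
        refine (hsmall2 (vP n s i1) (vA n s) ?_ (hk3 (by omega))).elim
        intro t ht
        rcases t with a | m | y
        · exact Finset.mem_insert.2 (Or.inr (Finset.mem_singleton.2 (inl_eq_vA a)))
        · have hLm := m.isLt
          simp only [Finset.mem_insert, Finset.mem_singleton]
          by_cases hm0 : (m : ℕ) = (i1 : ℕ)
          · exact Or.inl (vP_eq hm0)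
          by_cases hmj2 : (m : ℕ) = (j2 : ℕ)
          · exact absurd (by rw [← vP_eq hmj2]; exact ht) hv2
          by_cases hmj1 : (m : ℕ) = (j1 : ℕ)
          · exact absurd (by rw [← vP_eq hmj1]; exact ht) hv1
          · exact absurd (D_adj_PP (Or.inl (by omega))) (hval1 _ ht (vP_ne (by omega)))
        · exact absurd (D_adj_BP (by omega)) (hval2 _ ht (vB_ne_vP _ _))
      · exact absurd (D_adj_PP (by omega)) (hind _ hu1 _ hu2)
    · -- (M2,M4)
      subst hU2; subst hV2
      have hL2 := i2.isLt
      have hne : (i1 : ℕ) ≠ n - 2 := fun e =>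
        hval2 _ hu1 (Ne.symm (vB_ne_vP _ _)) (D_adj_PP (Or.inl (by omega)))
      refine (hsmall2 (vP n s i1) (vB n s x2) ?_ (hk3 (by omega))).elim
      intro t ht
      rcases t with a | m | y
      · exact absurd (D_adj_AP (by omega))
          (hval1 (vA n s) (by rw [← inl_eq_vA a]; exact ht) (vA_ne_vP _))
      · have hLm := m.isLt
        simp only [Finset.mem_insert, Finset.mem_singleton]
        by_cases hm0 : (m : ℕ) = (i1 : ℕ)
        · exact Or.inl (vP_eq hm0)
        by_cases hmj1 : (m : ℕ) = (j1 : ℕ)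
        · exact absurd (by rw [← vP_eq hmj1]; exact ht) hv1
        by_cases hmv : (m : ℕ) = (i2 : ℕ)
        · exact absurd (by rw [← vP_eq hmv]; exact ht) hv2
        · exact absurd (D_adj_PP (by omega)) (hind _ ht _ hu1)
      · simp only [Finset.mem_insert, Finset.mem_singleton]
        by_cases hxy : y = x2
        · exact Or.inr (by rw [hxy])
        · exact absurd (D_adj_BP (by omega)) (hval2 _ ht (vB_ne hxy))
    · exact absurd hn1 (by omega)
  -- ================= move 1 is M3 : right shift into p(n-1) =================
  · subst hU1; subst hV1
    have hL1 := i1.isLt; have hLj1 := j1.isLt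
    rcases downhill hadj2 hd2 with ⟨-, i2, hi2, hU2, hV2⟩ | ⟨i2, j2, hU2, hV2, hij2, hle2⟩ |
      ⟨-, i2, j2, hU2, hV2, hij2, hje2⟩ | ⟨x2, i2, hU2, hV2, hie2⟩ | ⟨hn1, -⟩
    · -- (M3,M1)
      subst hU2; subst hV2
      have hL2 := i2.isLt
      by_cases he : (i1 : ℕ) = (i2 : ℕ)
      · -- n = 2, same u : I ⊆ {u}
        refine (hsmall1 (vP n s i1) ?_).elim
        intro t ht
        rcases t with a | m | y
        · exact absurd (by rw [← inl_eq_vA a]; exact ht) hv2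
        · have hLm := m.isLt
          simp only [Finset.mem_singleton]
          by_cases hmj : (m : ℕ) = (j1 : ℕ)
          · exact absurd (by rw [← vP_eq hmj]; exact ht) hv1
          · exact vP_eq (by omega)
        · exact absurd (D_adj_BP (by omega)) (hval1 _ ht (vB_ne_vP _ _))
      · have hne12 : (i1 : ℕ) ≠ 1 := fun e =>
          hind _ hu2 _ hu1 (D_adj_PP (Or.inl (by omega)))
        refine (hsmall2 (vP n s i2) (vP n s i1) ?_ (hk3 (by omega))).elim
        intro t ht
        rcases t with a | m | y
        · exact absurd (by rw [← inl_eq_vA a]; exact ht) hv2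
        · have hLm := m.isLt
          simp only [Finset.mem_insert, Finset.mem_singleton]
          by_cases hm0 : (m : ℕ) = (i2 : ℕ)
          · exact Or.inl (vP_eq hm0)
          by_cases hm2 : (m : ℕ) = (i1 : ℕ)
          · exact Or.inr (vP_eq hm2)
          by_cases hmj : (m : ℕ) = (j1 : ℕ)
          · exact absurd (by rw [← vP_eq hmj]; exact ht) hv1
          · exact absurd (D_adj_PP (Or.inr (by omega))) (hind _ ht _ hu2)
        · exact absurd (D_adj_BP (by omega)) (hval1 _ ht (vB_ne_vP _ _))
    · -- (M3,M2)
      subst hU2; subst hV2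
      have hL2 := i2.isLt; have hLj2 := j2.isLt
      by_cases he : (i1 : ℕ) = (i2 : ℕ)
      · refine (hsmall2 (vP n s i1) (vA n s) ?_ (hk3 (by omega))).elim
        intro t ht
        rcases t with a | m | y
        · exact Finset.mem_insert.2 (Or.inr (Finset.mem_singleton.2 (inl_eq_vA a)))
        · have hLm := m.isLt
          simp only [Finset.mem_insert, Finset.mem_singleton]
          by_cases hm0 : (m : ℕ) = (i1 : ℕ)
          · exact Or.inl (vP_eq hm0)
          by_cases hmj1 : (m : ℕ) = (j1 : ℕ)
          · exact absurd (by rw [← vP_eq hmj1]; exact ht) hv1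
          by_cases hmj2 : (m : ℕ) = (j2 : ℕ)
          · exact absurd (by rw [← vP_eq hmj2]; exact ht) hv2
          · exact absurd (D_adj_PP (Or.inl (by omega))) (hval2 _ ht (vP_ne (by omega)))
        · exact absurd (D_adj_BP (by omega)) (hval1 _ ht (vB_ne_vP _ _))
      · exact absurd (D_adj_PP (by omega)) (hind _ hu1 _ hu2)
    · -- (M3,M3)
      subst hU2; subst hV2
      exact hfin (vP_eq (by omega)) (vP_eq (by omega))
    · -- (M3,M4)
      subst hU2; subst hV2
      exact absurd (D_adj_BP (by omega)) (hval1 _ hu2 (vB_ne_vP _ _))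
    · exact absurd hn1 (by omega)
  -- ================= move 1 is M4 : b → p(n-1) =================
  · subst hU1; subst hV1
    have hL1 := i1.isLt
    rcases downhill hadj2 hd2 with ⟨-, i2, hi2, hU2, hV2⟩ | ⟨i2, j2, hU2, hV2, hij2, hle2⟩ |
      ⟨-, i2, j2, hU2, hV2, hij2, hje2⟩ | ⟨x2, i2, hU2, hV2, hie2⟩ | ⟨hn1, -⟩
    · -- (M4,M1)
      subst hU2; subst hV2
      have hL2 := i2.isLt
      have hne12 : (i1 : ℕ) ≠ 1 := fun e =>
        hval1 _ hu2 (Ne.symm (vB_ne_vP _ _)) (D_adj_PP (Or.inl (by omega)))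
      refine (hsmall2 (vP n s i2) (vB n s x1) ?_ (hk3 (by omega))).elim
      intro t ht
      rcases t with a | m | y
      · exact absurd (by rw [← inl_eq_vA a]; exact ht) hv2
      · have hLm := m.isLt
        simp only [Finset.mem_insert, Finset.mem_singleton]
        by_cases hm0 : (m : ℕ) = (i2 : ℕ)
        · exact Or.inl (vP_eq hm0)
        by_cases hmv : (m : ℕ) = (i1 : ℕ)
        · exact absurd (by rw [← vP_eq hmv]; exact ht) hv1
        by_cases hm2 : (m : ℕ) = n - 2
        · exact absurd (D_adj_PP (Or.inl (by omega))) (hval1 _ ht (Ne.symm (vB_ne_vP _ _)))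
        · exact absurd (D_adj_PP (Or.inr (by omega))) (hind _ ht _ hu2)
      · simp only [Finset.mem_insert, Finset.mem_singleton]
        by_cases hxy : y = x1
        · exact Or.inr (by rw [hxy])
        · exact absurd (D_adj_BP (by omega)) (hval1 _ ht (vB_ne hxy))
    · -- (M4,M2)
      subst hU2; subst hV2
      have hL2 := i2.isLt; have hLj2 := j2.isLt
      have hne : (i2 : ℕ) ≠ n - 2 := fun e =>
        hval1 _ hu2 (Ne.symm (vB_ne_vP _ _)) (D_adj_PP (Or.inl (by omega)))
      refine (hsmall2 (vP n s i2) (vB n s x1) ?_ (hk3 (by omega))).elim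
      intro t ht
      rcases t with a | m | y
      · exact absurd (D_adj_AP (by omega))
          (hval2 (vA n s) (by rw [← inl_eq_vA a]; exact ht) (vA_ne_vP _))
      · have hLm := m.isLt
        simp only [Finset.mem_insert, Finset.mem_singleton]
        by_cases hm0 : (m : ℕ) = (i2 : ℕ)
        · exact Or.inl (vP_eq hm0)
        by_cases hmj2 : (m : ℕ) = (j2 : ℕ)
        · exact absurd (by rw [← vP_eq hmj2]; exact ht) hv2
        by_cases hmv : (m : ℕ) = (i1 : ℕ)
        · exact absurd (by rw [← vP_eq hmv]; exact ht) hv1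
        · exact absurd (D_adj_PP (by omega)) (hind _ ht _ hu2)
      · simp only [Finset.mem_insert, Finset.mem_singleton]
        by_cases hxy : y = x1
        · exact Or.inr (by rw [hxy])
        · exact absurd (D_adj_BP (by omega)) (hval1 _ ht (vB_ne hxy))
    · -- (M4,M3)
      subst hU2; subst hV2
      exact absurd (D_adj_BP (by omega)) (hval2 _ hu1 (vB_ne_vP _ _))
    · -- (M4,M4)
      subst hU2; subst hV2
      by_cases hxy : x1 = x2
      · exact hfin (by rw [hxy]) (vP_eq (by omega))
      · exact absurd (D_adj_BP (by omega)) (hval1 _ hu2 (vB_ne (Ne.symm hxy)))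
    · exact absurd hn1 (by omega)
  · exact absurd hn1 (by omega)

lemma acyclic_gen (n s k : ℕ) (hn : 2 ≤ n) (hn4 : n ≤ 4) (hk2 : 2 ≤ k) (hk3 : 3 ≤ n → 3 ≤ k) :
    (TS (D 1 n s) k).IsAcyclic := by
  apply acyclic_of_measure _ (fun I => ∑ x ∈ I.1, wt n s x)
  · intro I J h
    obtain ⟨u, v, hadj, -, -, -, -, hsum, -⟩ := slide_facts h (wt n s)
    have := wt_ne hadj
    omega
  · exact fun I J1 J2 => hB_gen n s k hn hn4 hk2 hk3 I J1 J2

lemma hasCycleLen4 {V : Type*} {G : SimpleGraph V} {a b c d : V}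
    (h1 : G.Adj a b) (h2 : G.Adj b c) (h3 : G.Adj c d) (h4 : G.Adj d a)
    (hac : a ≠ c) (hbd : b ≠ d) : HasCycleLen G 4 := by
  refine ⟨a, Walk.cons h1 (Walk.cons h2 (Walk.cons h3 (Walk.cons h4 Walk.nil))), ?_, rfl⟩
  have nab := h1.ne
  have nbc := h2.ne
  have ncd := h3.ne
  have nda := h4.ne'
  constructor
  · constructor
    · simp only [Walk.isTrail_def, Walk.edges_cons, Walk.edges_nil, List.nodup_cons,
        List.mem_cons, List.not_mem_nil, or_false, List.nodup_nil, and_true, Sym2.eq,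
        Sym2.rel_iff', Prod.mk.injEq, Prod.swap_prod_mk, not_or]
      tauto
    · simp
  · simp only [Walk.support_cons, Walk.support_nil, List.tail_cons, List.nodup_cons,
      List.mem_cons, List.not_mem_nil, or_false, List.nodup_nil, and_true, List.mem_singleton]
    tauto

section NotAdj

variable {n s : ℕ}

lemma not_adj_AP {i : Fin n} (h : (i : ℕ) ≠ 0) : ¬ (D 1 n s).Adj (vA n s) (vP n s i) := by
  rw [D_adj_iff]
  rintro (⟨i', j', e1, e2, hij⟩ | ⟨i', hi', ⟨e1, e2⟩ | ⟨e1, e2⟩⟩ |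
    ⟨x', i', hi', ⟨e1, e2⟩ | ⟨e1, e2⟩⟩) <;> simp_all [vA, vP, vB]

lemma not_adj_PP {i j : Fin n} (h1 : (i : ℕ) + 1 ≠ (j : ℕ)) (h2 : (j : ℕ) + 1 ≠ (i : ℕ)) :
    ¬ (D 1 n s).Adj (vP n s i) (vP n s j) := by
  rw [D_adj_iff]
  rintro (⟨i', j', e1, e2, hij⟩ | ⟨i', hi', ⟨e1, e2⟩ | ⟨e1, e2⟩⟩ |
    ⟨x', i', hi', ⟨e1, e2⟩ | ⟨e1, e2⟩⟩) <;> simp_all [vA, vP, vB]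

lemma not_adj_BP {x : Fin s} {i : Fin n} (h : (i : ℕ) ≠ n - 1) :
    ¬ (D 1 n s).Adj (vB n s x) (vP n s i) := by
  rw [D_adj_iff]
  rintro (⟨i', j', e1, e2, hij⟩ | ⟨i', hi', ⟨e1, e2⟩ | ⟨e1, e2⟩⟩ |
    ⟨x', i', hi', ⟨e1, e2⟩ | ⟨e1, e2⟩⟩) <;> simp_all [vA, vP, vB]

lemma not_adj_AB (x : Fin s) : ¬ (D 1 n s).Adj (vA n s) (vB n s x) := by
  rw [D_adj_iff]
  rintro (⟨i', j', e1, e2, hij⟩ | ⟨i', hi', ⟨e1, e2⟩ | ⟨e1, e2⟩⟩ |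
    ⟨x', i', hi', ⟨e1, e2⟩ | ⟨e1, e2⟩⟩) <;> simp_all [vA, vP, vB]

lemma not_adj_BB (x y : Fin s) : ¬ (D 1 n s).Adj (vB n s x) (vB n s y) := by
  rw [D_adj_iff]
  rintro (⟨i', j', e1, e2, hij⟩ | ⟨i', hi', ⟨e1, e2⟩ | ⟨e1, e2⟩⟩ |
    ⟨x', i', hi', ⟨e1, e2⟩ | ⟨e1, e2⟩⟩) <;> simp_all [vA, vP, vB]

end NotAdj

lemma c4_k2 (n s : ℕ) (hn : 3 ≤ n) (hs : 1 ≤ s) : HasCycleLen (TS (D 1 n s) 2) 4 := by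
  classical
  have h0 : 0 < n := by omega
  have he : n - 1 < n := by omega
  let i0 : Fin n := ⟨0, h0⟩
  let ie : Fin n := ⟨n - 1, he⟩
  let x0 : Fin s := ⟨0, hs⟩
  let pa := vA n s
  let p0 := vP n s i0
  let pe := vP n s ie
  let b0 := vB n s x0
  have nae : pa ≠ pe := vA_ne_vP _
  have na0 : pa ≠ p0 := vA_ne_vP _
  have nab : pa ≠ b0 := vA_ne_vB _
  have n0e : p0 ≠ pe := vP_ne (show (0 : ℕ) ≠ n - 1 by omega)
  have n0b : p0 ≠ b0 := (vB_ne_vP _ _).symm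
  have neb : pe ≠ b0 := (vB_ne_vP _ _).symm
  -- independent sets
  have hT1 : TSVert (D 1 n s) 2 {pa, pe} := by
    constructor
    · rw [Finset.card_insert_of_notMem (by simpa using nae), Finset.card_singleton]
    · intro u hu v hv
      simp only [Finset.mem_insert, Finset.mem_singleton] at hu hv
      rcases hu with rfl | rfl <;> rcases hv with rfl | rfl
      · exact (D 1 n s).loopless.irrefl _
      · exact not_adj_AP (show n - 1 ≠ 0 by omega)
      · exact fun h => not_adj_AP (show n - 1 ≠ 0 by omega) h.symm
      · exact (D 1 n s).loopless.irrefl _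
  have hT2 : TSVert (D 1 n s) 2 {pe, p0} := by
    constructor
    · rw [Finset.card_insert_of_notMem (by simpa using n0e.symm), Finset.card_singleton]
    · intro u hu v hv
      simp only [Finset.mem_insert, Finset.mem_singleton] at hu hv
      rcases hu with rfl | rfl <;> rcases hv with rfl | rfl
      · exact (D 1 n s).loopless.irrefl _
      · exact not_adj_PP (show n - 1 + 1 ≠ 0 by omega) (show (0 : ℕ) + 1 ≠ n - 1 by omega)
      · exact not_adj_PP (show (0 : ℕ) + 1 ≠ n - 1 by omega) (show n - 1 + 1 ≠ 0 by omega)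
      · exact (D 1 n s).loopless.irrefl _
  have hT3 : TSVert (D 1 n s) 2 {p0, b0} := by
    constructor
    · rw [Finset.card_insert_of_notMem (by simpa using n0b), Finset.card_singleton]
    · intro u hu v hv
      simp only [Finset.mem_insert, Finset.mem_singleton] at hu hv
      rcases hu with rfl | rfl <;> rcases hv with rfl | rfl
      · exact (D 1 n s).loopless.irrefl _
      · exact fun h => not_adj_BP (show (0 : ℕ) ≠ n - 1 by omega) h.symm
      · exact not_adj_BP (show (0 : ℕ) ≠ n - 1 by omega)
      · exact (D 1 n s).loopless.irrefl _
  have hT4 : TSVert (D 1 n s) 2 {b0, pa} := by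
    constructor
    · rw [Finset.card_insert_of_notMem (by simpa using nab.symm), Finset.card_singleton]
    · intro u hu v hv
      simp only [Finset.mem_insert, Finset.mem_singleton] at hu hv
      rcases hu with rfl | rfl <;> rcases hv with rfl | rfl
      · exact (D 1 n s).loopless.irrefl _
      · exact fun h => not_adj_AB _ h.symm
      · exact not_adj_AB _
      · exact (D 1 n s).loopless.irrefl _
  let T1 : {I : Finset _ // TSVert (D 1 n s) 2 I} := ⟨{pa, pe}, hT1⟩
  let T2 : {I : Finset _ // TSVert (D 1 n s) 2 I} := ⟨{pe, p0}, hT2⟩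
  let T3 : {I : Finset _ // TSVert (D 1 n s) 2 I} := ⟨{p0, b0}, hT3⟩
  let T4 : {I : Finset _ // TSVert (D 1 n s) 2 I} := ⟨{b0, pa}, hT4⟩
  have hadjA0 : (D 1 n s).Adj pa p0 := D_adj_AP rfl
  have hadjBe : (D 1 n s).Adj b0 pe := D_adj_BP rfl
  have e12 : (TS (D 1 n s) 2).Adj T1 T2 := by
    refine ts_adj_intro T1 T2 pa p0 hadjA0 (by simp [T1]) ?_ ?_
    · simp only [T1, Finset.mem_insert, Finset.mem_singleton]
      push_neg
      exact ⟨na0.symm, n0e⟩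
    · show ({pe, p0} : Finset _) = insert p0 (({pa, pe} : Finset _).erase pa)
      rw [Finset.erase_insert (by simpa using nae)]
      ext t; simp only [Finset.mem_insert, Finset.mem_singleton]; tauto
  have e23 : (TS (D 1 n s) 2).Adj T2 T3 := by
    refine ts_adj_intro T2 T3 pe b0 hadjBe.symm (by simp [T2]) ?_ ?_
    · simp only [T2, Finset.mem_insert, Finset.mem_singleton]
      push_neg
      exact ⟨neb.symm, n0b.symm⟩
    · show ({p0, b0} : Finset _) = insert b0 (({pe, p0} : Finset _).erase pe)
      rw [Finset.erase_insert (by simpa using n0e.symm)]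
      ext t; simp only [Finset.mem_insert, Finset.mem_singleton]; tauto
  have e34 : (TS (D 1 n s) 2).Adj T3 T4 := by
    refine ts_adj_intro T3 T4 p0 pa hadjA0.symm (by simp [T3]) ?_ ?_
    · simp only [T3, Finset.mem_insert, Finset.mem_singleton]
      push_neg
      exact ⟨na0, nab⟩
    · show ({b0, pa} : Finset _) = insert pa (({p0, b0} : Finset _).erase p0)
      rw [Finset.erase_insert (by simpa using n0b)]
      ext t; simp only [Finset.mem_insert, Finset.mem_singleton]; tauto
  have e41 : (TS (D 1 n s) 2).Adj T4 T1 := by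
    refine ts_adj_intro T4 T1 b0 pe hadjBe (by simp [T4]) ?_ ?_
    · simp only [T4, Finset.mem_insert, Finset.mem_singleton]
      push_neg
      exact ⟨neb, nae.symm⟩
    · show ({pa, pe} : Finset _) = insert pe (({b0, pa} : Finset _).erase b0)
      rw [Finset.erase_insert (by simpa using nab.symm)]
      ext t; simp only [Finset.mem_insert, Finset.mem_singleton]; tauto
  have hne13 : T1 ≠ T3 := by
    intro e
    have hc : ({pa, pe} : Finset (Fin 1 ⊕ Fin n ⊕ Fin s)) = {p0, b0} :=
      congrArg Subtype.val e
    have h' : pa ∈ ({p0, b0} : Finset _) := by rw [← hc]; simp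
    simp only [Finset.mem_insert, Finset.mem_singleton] at h'
    rcases h' with h' | h'
    · exact na0 h'
    · exact nab h'
  have hne24 : T2 ≠ T4 := by
    intro e
    have hc : ({pe, p0} : Finset (Fin 1 ⊕ Fin n ⊕ Fin s)) = {b0, pa} :=
      congrArg Subtype.val e
    have h' : pe ∈ ({b0, pa} : Finset _) := by rw [← hc]; simp
    simp only [Finset.mem_insert, Finset.mem_singleton] at h'
    rcases h' with h' | h'
    · exact neb h'
    · exact nae h'.symm
  exact hasCycleLen4 e12 e23 e34 e41 hne13 hne24

set_option maxHeartbeats 2000000 in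
lemma c4_k3 (n s : ℕ) (hn : 5 ≤ n) (hs : 1 ≤ s) : HasCycleLen (TS (D 1 n s) 3) 4 := by
  classical
  have h0 : 0 < n := by omega
  have h2 : 2 < n := by omega
  have he : n - 1 < n := by omega
  let i0 : Fin n := ⟨0, h0⟩
  let i2 : Fin n := ⟨2, h2⟩
  let ie : Fin n := ⟨n - 1, he⟩
  let x0 : Fin s := ⟨0, hs⟩
  let pa := vA n s
  let p0 := vP n s i0
  let p2 := vP n s i2
  let pe := vP n s ie
  let b0 := vB n s x0
  have na0 : pa ≠ p0 := vA_ne_vP _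
  have na2 : pa ≠ p2 := vA_ne_vP _
  have nae : pa ≠ pe := vA_ne_vP _
  have nab : pa ≠ b0 := vA_ne_vB _
  have n20 : p2 ≠ p0 := vP_ne (show (2 : ℕ) ≠ 0 by omega)
  have n2e : p2 ≠ pe := vP_ne (show (2 : ℕ) ≠ n - 1 by omega)
  have n0e : p0 ≠ pe := vP_ne (show (0 : ℕ) ≠ n - 1 by omega)
  have n0b : p0 ≠ b0 := (vB_ne_vP _ _).symm
  have n2b : p2 ≠ b0 := (vB_ne_vP _ _).symm
  have neb : pe ≠ b0 := (vB_ne_vP _ _).symm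
  have indep : ∀ S : Finset (Fin 1 ⊕ Fin n ⊕ Fin s),
      (S = {pa, p2, pe} ∨ S = {pe, p2, p0} ∨ S = {p0, p2, b0} ∨ S = {b0, p2, pa}) →
      ∀ u ∈ S, ∀ v ∈ S, ¬ (D 1 n s).Adj u v := by
    rintro S (rfl | rfl | rfl | rfl) u hu v hv <;>
      simp only [Finset.mem_insert, Finset.mem_singleton] at hu hv <;>
      rcases hu with rfl | rfl | rfl <;> rcases hv with rfl | rfl | rfl <;>
      first
        | exact (D 1 n s).loopless.irrefl _
        | exact not_adj_AP (show (2 : ℕ) ≠ 0 by omega)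
        | exact fun h => not_adj_AP (show (2 : ℕ) ≠ 0 by omega) h.symm
        | exact not_adj_AP (show n - 1 ≠ 0 by omega)
        | exact fun h => not_adj_AP (show n - 1 ≠ 0 by omega) h.symm
        | exact not_adj_PP (show 2 + 1 ≠ n - 1 by omega) (show n - 1 + 1 ≠ 2 by omega)
        | exact not_adj_PP (show n - 1 + 1 ≠ 2 by omega) (show 2 + 1 ≠ n - 1 by omega)
        | exact not_adj_PP (show n - 1 + 1 ≠ 0 by omega) (show (0 : ℕ) + 1 ≠ n - 1 by omega)
        | exact not_adj_PP (show (0 : ℕ) + 1 ≠ n - 1 by omega) (show n - 1 + 1 ≠ 0 by omega)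
        | exact not_adj_PP (show 2 + 1 ≠ 0 by omega) (show (0 : ℕ) + 1 ≠ 2 by omega)
        | exact not_adj_PP (show (0 : ℕ) + 1 ≠ 2 by omega) (show 2 + 1 ≠ 0 by omega)
        | exact not_adj_BP (show (0 : ℕ) ≠ n - 1 by omega)
        | exact fun h => not_adj_BP (show (0 : ℕ) ≠ n - 1 by omega) h.symm
        | exact not_adj_BP (show (2 : ℕ) ≠ n - 1 by omega)
        | exact fun h => not_adj_BP (show (2 : ℕ) ≠ n - 1 by omega) h.symm
        | exact not_adj_AB _
        | exact fun h => not_adj_AB _ h.symm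

  have nm1 : pa ∉ ({p2, pe} : Finset (Fin 1 ⊕ Fin n ⊕ Fin s)) := by
    simp only [Finset.mem_insert, Finset.mem_singleton]; push_neg; exact ⟨na2, nae⟩
  have nm2 : pe ∉ ({p2, p0} : Finset (Fin 1 ⊕ Fin n ⊕ Fin s)) := by
    simp only [Finset.mem_insert, Finset.mem_singleton]; push_neg; exact ⟨n2e.symm, n0e.symm⟩
  have nm3 : p0 ∉ ({p2, b0} : Finset (Fin 1 ⊕ Fin n ⊕ Fin s)) := by
    simp only [Finset.mem_insert, Finset.mem_singleton]; push_neg; exact ⟨n20.symm, n0b⟩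
  have nm4 : b0 ∉ ({p2, pa} : Finset (Fin 1 ⊕ Fin n ⊕ Fin s)) := by
    simp only [Finset.mem_insert, Finset.mem_singleton]; push_neg; exact ⟨n2b.symm, nab.symm⟩
  have hT1 : TSVert (D 1 n s) 3 {pa, p2, pe} := by
    refine ⟨?_, indep _ (by tauto)⟩
    rw [Finset.card_insert_of_notMem nm1, Finset.card_insert_of_notMem (by simpa using n2e), Finset.card_singleton]
  have hT2 : TSVert (D 1 n s) 3 {pe, p2, p0} := by
    refine ⟨?_, indep _ (by tauto)⟩
    rw [Finset.card_insert_of_notMem nm2, Finset.card_insert_of_notMem (by simpa using n20), Finset.card_singleton]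
  have hT3 : TSVert (D 1 n s) 3 {p0, p2, b0} := by
    refine ⟨?_, indep _ (by tauto)⟩
    rw [Finset.card_insert_of_notMem nm3, Finset.card_insert_of_notMem (by simpa using n2b), Finset.card_singleton]
  have hT4 : TSVert (D 1 n s) 3 {b0, p2, pa} := by
    refine ⟨?_, indep _ (by tauto)⟩
    rw [Finset.card_insert_of_notMem nm4, Finset.card_insert_of_notMem (by simpa using na2\.symm), Finset.card_singleton]
  let T1 : {I : Finset _ // TSVert (D 1 n s) 3 I} := ⟨{pa, p2, pe}, hT1⟩
  let T2 : {I : Finset _ // TSVert (D 1 n s) 3 I} := ⟨{pe, p2, p0}, hT2⟩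
  let T3 : {I : Finset _ // TSVert (D 1 n s) 3 I} := ⟨{p0, p2, b0}, hT3⟩
  let T4 : {I : Finset _ // TSVert (D 1 n s) 3 I} := ⟨{b0, p2, pa}, hT4⟩
  have hadjA0 : (D 1 n s).Adj pa p0 := D_adj_AP rfl
  have hadjBe : (D 1 n s).Adj b0 pe := D_adj_BP rfl
  have e12 : (TS (D 1 n s) 3).Adj T1 T2 := by
    refine ts_adj_intro T1 T2 pa p0 hadjA0 (by simp [T1]) ?_ ?_
    · simp only [T1, Finset.mem_insert, Finset.mem_singleton]
      push_neg
      exact ⟨na0.symm, n20.symm, n0e⟩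
    · show ({pe, p2, p0} : Finset _) = insert p0 (({pa, p2, pe} : Finset _).erase pa)
      rw [Finset.erase_insert nm1]
      ext t; simp only [Finset.mem_insert, Finset.mem_singleton]; tauto
  have e23 : (TS (D 1 n s) 3).Adj T2 T3 := by
    refine ts_adj_intro T2 T3 pe b0 hadjBe.symm (by simp [T2]) ?_ ?_
    · simp only [T2, Finset.mem_insert, Finset.mem_singleton]
      push_neg
      exact ⟨neb.symm, n2b.symm, n0b.symm⟩
    · show ({p0, p2, b0} : Finset _) = insert b0 (({pe, p2, p0} : Finset _).erase pe)
      rw [Finset.erase_insert nm2]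
      ext t; simp only [Finset.mem_insert, Finset.mem_singleton]; tauto
  have e34 : (TS (D 1 n s) 3).Adj T3 T4 := by
    refine ts_adj_intro T3 T4 p0 pa hadjA0.symm (by simp [T3]) ?_ ?_
    · simp only [T3, Finset.mem_insert, Finset.mem_singleton]
      push_neg
      exact ⟨na0, na2, nab⟩
    · show ({b0, p2, pa} : Finset _) = insert pa (({p0, p2, b0} : Finset _).erase p0)
      rw [Finset.erase_insert nm3]
      ext t; simp only [Finset.mem_insert, Finset.mem_singleton]; tauto
  have e41 : (TS (D 1 n s) 3).Adj T4 T1 := by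
    refine ts_adj_intro T4 T1 b0 pe hadjBe (by simp [T4]) ?_ ?_
    · simp only [T4, Finset.mem_insert, Finset.mem_singleton]
      push_neg
      exact ⟨neb, n2e.symm, nae.symm⟩
    · show ({pa, p2, pe} : Finset _) = insert pe (({b0, p2, pa} : Finset _).erase b0)
      rw [Finset.erase_insert nm4]
      ext t; simp only [Finset.mem_insert, Finset.mem_singleton]; tauto
  have hne13 : T1 ≠ T3 := by
    intro e
    have hc : ({pa, p2, pe} : Finset (Fin 1 ⊕ Fin n ⊕ Fin s)) = {p0, p2, b0} :=
      congrArg Subtype.val e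
    have h' : pa ∈ ({p0, p2, b0} : Finset _) := by rw [← hc]; simp
    simp only [Finset.mem_insert, Finset.mem_singleton] at h'
    rcases h' with h' | h' | h'
    · exact na0 h'
    · exact na2 h'
    · exact nab h'
  have hne24 : T2 ≠ T4 := by
    intro e
    have hc : ({pe, p2, p0} : Finset (Fin 1 ⊕ Fin n ⊕ Fin s)) = {b0, p2, pa} :=
      congrArg Subtype.val e
    have h' : pe ∈ ({b0, p2, pa} : Finset _) := by rw [← hc]; simp
    simp only [Finset.mem_insert, Finset.mem_singleton] at h'
    rcases h' with h' | h' | h'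
    · exact neb h'
    · exact n2e h'.symm
    · exact nae h'.symm
  exact hasCycleLen4 e12 e23 e34 e41 hne13 hne24

theorem stmt2 (k n s : ℕ) (hk : k = 2 ∨ k = 3) (hn : 1 ≤ n) (hs : 1 ≤ s) :
    (2 * k - 1 ≤ n → HasCycleLen (TS (D 1 n s) k) 4) ∧
    (n < 2 * k - 1 → (TS (D 1 n s) k).IsAcyclic) := by
  constructor
  · intro h4
    rcases hk with rfl | rfl
    · exact c4_k2 n s (by omega) hs
    · exact c4_k3 n s (by omega) hs
  · intro hlt
    have hk2 : 2 ≤ k := by rcases hk with rfl | rfl <;> omega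
    rcases eq_or_lt_of_le hn with he | hn2
    · subst he
      exact acyclic_n1 s k hk2
    · exact acyclic_gen n s k (by omega) (by rcases hk with rfl | rfl <;> omega) hk2
        (fun h3 => by rcases hk with rfl | rfl <;> omega)
end

section
/- For k ≥ 4 and any forest F: if F contains 2K_2 + (k−2)K_1, or D_{2,2,2} + (k−2)K_1, or D_{2,4,2} + (k−3)K_1 as an induced subgraph, then TS_k(F) contains a cycle. -/
open SimpleGraph

/-! ### Auxiliary material -/

instance : DecidableRel twoK2.Adj := fun a b =>
  decidable_of_iff _ (SimpleGraph.fromRel_adj _ a b).symm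

set_option synthInstance.maxSize 5000 in
instance (r n s : ℕ) : DecidableRel (D r n s).Adj := fun a b =>
  decidable_of_iff _ (SimpleGraph.fromRel_adj _ a b).symm

instance {W : Type*} [DecidableEq W] [Fintype W] (G : SimpleGraph W) [DecidableRel G.Adj]
    (k : ℕ) : DecidablePred (TSVert G k) := fun I => by unfold TSVert; infer_instance

lemma TS_adj_of {W : Type*} [DecidableEq W] (G : SimpleGraph W) {k : ℕ}
    (I J : {I : Finset W // TSVert G k I}) (u v : W)
    (h1 : (I : Finset W) \ (J : Finset W) = {u})
    (h2 : (J : Finset W) \ (I : Finset W) = {v}) (h : G.Adj u v) :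
    (TS G k).Adj I J := by
  rw [TS, SimpleGraph.fromRel_adj]
  refine ⟨?_, Or.inl ⟨u, v, ?_, ?_, h⟩⟩
  · intro he
    have : (I : Finset W) = J := congrArg Subtype.val he
    rw [this, Finset.sdiff_self] at h1
    exact absurd h1.symm (Finset.singleton_ne_empty u)
  · rw [← Finset.coe_sdiff, h1, Finset.coe_singleton]
  · rw [← Finset.coe_sdiff, h2, Finset.coe_singleton]

lemma TS_adj_of' {W : Type*} (G : SimpleGraph W) {k : ℕ}
    (I J : {I : Finset W // TSVert G k I}) (u v : W)
    (h1 : ((I : Finset W) : Set W) \ ((J : Finset W) : Set W) = {u})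
    (h2 : ((J : Finset W) : Set W) \ ((I : Finset W) : Set W) = {v}) (h : G.Adj u v) :
    (TS G k).Adj I J := by
  rw [TS, SimpleGraph.fromRel_adj]
  refine ⟨?_, Or.inl ⟨u, v, h1, h2, h⟩⟩
  intro he
  have : (I : Finset W) = J := congrArg Subtype.val he
  rw [this, sdiff_self] at h1
  exact absurd h1.symm (by simp)

lemma disjUnion'_nK1_adj {β : Type*} (H : SimpleGraph β) (m : ℕ) (a b : β ⊕ Fin m) :
    (disjUnion' H (nK1 m)).Adj a b ↔ ∃ x y, a = Sum.inl x ∧ b = Sum.inl y ∧ H.Adj x y := by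
  rw [disjUnion', SimpleGraph.fromRel_adj]
  constructor
  · rintro ⟨hne, (⟨x, y, rfl, rfl, hxy⟩ | ⟨x, y, rfl, rfl, hxy⟩) |
      (⟨x, y, rfl, rfl, hxy⟩ | ⟨x, y, rfl, rfl, hxy⟩)⟩
    · exact ⟨x, y, rfl, rfl, hxy⟩
    · exact absurd hxy (by simp [nK1])
    · exact ⟨y, x, rfl, rfl, hxy.symm⟩
    · exact absurd hxy (by simp [nK1])
  · rintro ⟨x, y, rfl, rfl, hxy⟩
    exact ⟨by simpa using hxy.ne, Or.inl (Or.inl ⟨x, y, rfl, rfl, hxy⟩)⟩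

lemma lift_cycle {V β : Type*} [DecidableEq V] [DecidableEq β] (F : SimpleGraph V)
    (H : SimpleGraph β) (m j : ℕ) (e : disjUnion' H (nK1 m) ↪g F)
    (hc : HasCycle (TS H j)) : HasCycle (TS F (j + m)) := by
  set f : β → V := fun x => e (Sum.inl x) with hfdef
  set g : Fin m → V := fun y => e (Sum.inr y) with hgdef
  have hf : Function.Injective f := fun a b hab => by
    simpa using e.injective hab
  have hg : Function.Injective g := fun a b hab => by
    simpa using e.injective hab
  have hfg : ∀ x y, f x ≠ g y := fun x y hxy => by simpa using e.injective hxy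
  set T : Finset V := Finset.univ.image g with hTdef
  have hTcard : T.card = m := by
    rw [hTdef, Finset.card_image_of_injective _ hg, Finset.card_univ, Fintype.card_fin]
  have hmemT : ∀ x : V, x ∈ T ↔ ∃ y, g y = x := by
    intro x; simp [hTdef]
  set Φ : Finset β → Finset V := fun I => I.image f ∪ T with hΦdef
  have hdisj : ∀ I : Finset β, Disjoint (I.image f) T := by
    intro I
    rw [Finset.disjoint_left]
    rintro x hx hxT
    obtain ⟨a, _, rfl⟩ := Finset.mem_image.mp hx
    obtain ⟨y, hy⟩ := (hmemT _).mp hxT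
    exact hfg a y hy.symm
  have hprop : ∀ I : Finset β, TSVert H j I → TSVert F (j + m) (Φ I) := by
    rintro I ⟨hcard, hind⟩
    constructor
    · rw [hΦdef]
      rw [Finset.card_union_of_disjoint (hdisj I), Finset.card_image_of_injective _ hf,
        hcard, hTcard]
    · intro a ha b hb hadj
      rw [hΦdef, Finset.mem_union] at ha hb
      have hex : ∀ x, x ∈ I.image f ∪ T → ∃ c, e c = x ∧ ∀ z, c = Sum.inl z → z ∈ I := by
        intro x hx
        rcases Finset.mem_union.mp hx with hx | hx
        · obtain ⟨z, hz, rfl⟩ := Finset.mem_image.mp hx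
          exact ⟨Sum.inl z, rfl, fun w hw => by cases hw; exact hz⟩
        · obtain ⟨y, hy⟩ := (hmemT _).mp hx
          exact ⟨Sum.inr y, hy, fun w hw => by cases hw⟩
      obtain ⟨c, rfl, hcI⟩ := hex a (Finset.mem_union.mpr ha)
      obtain ⟨d, rfl, hdI⟩ := hex b (Finset.mem_union.mpr hb)
      rw [e.map_adj_iff, disjUnion'_nK1_adj] at hadj
      obtain ⟨x, y, rfl, rfl, hxy⟩ := hadj
      exact hind x (hcI x rfl) y (hdI y rfl) hxy
  have hdiffset : ∀ I J : Finset β,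
      ((Φ I : Finset V) : Set V) \ ((Φ J : Finset V) : Set V) = f '' (↑I \ ↑J) := by
    intro I J
    ext x
    simp only [hΦdef, Finset.coe_union, Finset.coe_image, Set.mem_diff, Set.mem_union,
      Set.mem_image, Finset.mem_coe]
    constructor
    · rintro ⟨ha | ha, hb⟩
      · obtain ⟨z, hz, rfl⟩ := ha
        refine ⟨z, ⟨hz, fun hzJ => hb (Or.inl ⟨z, hzJ, rfl⟩)⟩, rfl⟩
      · exact absurd (Or.inr ha) hb
    · rintro ⟨z, ⟨hzI, hzJ⟩, rfl⟩
      refine ⟨Or.inl ⟨z, hzI, rfl⟩, ?_⟩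
      rintro (⟨w, hwJ, hw⟩ | hT)
      · exact hzJ (hf hw ▸ hwJ)
      · obtain ⟨y, hy⟩ := (hmemT _).mp (Finset.mem_coe.mp hT)
        exact hfg z y hy.symm
  have hΦinj : Function.Injective Φ := by
    intro I J hIJ
    ext z
    have key : ∀ I J : Finset β, Φ I = Φ J → ∀ z, z ∈ I → z ∈ J := by
      intro I J hIJ z hz
      have : f z ∈ Φ J := hIJ ▸ (by
        rw [hΦdef]; exact Finset.mem_union_left _ (Finset.mem_image_of_mem f hz))
      rw [hΦdef, Finset.mem_union] at this
      rcases this with h | h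
      · obtain ⟨w, hw, hww⟩ := Finset.mem_image.mp h
        exact hf hww ▸ hw
      · obtain ⟨y, hy⟩ := (hmemT _).mp h
        exact absurd hy.symm (hfg z y)
    exact ⟨key I J hIJ z, key J I hIJ.symm z⟩
  obtain ⟨v, w, hw⟩ := hc
  let φ : {I : Finset β // TSVert H j I} → {I : Finset V // TSVert F (j + m) I} :=
    fun I => ⟨Φ I.val, hprop I.val I.prop⟩
  have hφadj : ∀ I J, (TS H j).Adj I J → (TS F (j + m)).Adj (φ I) (φ J) := by
    intro I J hIJ
    rw [TS, SimpleGraph.fromRel_adj] at hIJ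
    obtain ⟨hne, ⟨u', v', h1, h2, huv⟩ | ⟨u', v', h1, h2, huv⟩⟩ := hIJ
    · refine TS_adj_of' F (φ I) (φ J) (f u') (f v') ?_ ?_ ?_
      · rw [show ((φ I : Finset V) : Set V) = ↑(Φ I.val) from rfl,
          show ((φ J : Finset V) : Set V) = ↑(Φ J.val) from rfl, hdiffset, h1,
          Set.image_singleton]
      · rw [show ((φ J : Finset V) : Set V) = ↑(Φ J.val) from rfl,
          show ((φ I : Finset V) : Set V) = ↑(Φ I.val) from rfl, hdiffset, h2,
          Set.image_singleton]
      · exact e.map_adj_iff.mpr ((disjUnion'_nK1_adj H m _ _).mpr ⟨u', v', rfl, rfl, huv⟩)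
    · refine ((TS F (j+m)).adj_symm (TS_adj_of' F (φ J) (φ I) (f u') (f v') ?_ ?_ ?_))
      · rw [show ((φ J : Finset V) : Set V) = ↑(Φ J.val) from rfl,
          show ((φ I : Finset V) : Set V) = ↑(Φ I.val) from rfl, hdiffset, h1,
          Set.image_singleton]
      · rw [show ((φ I : Finset V) : Set V) = ↑(Φ I.val) from rfl,
          show ((φ J : Finset V) : Set V) = ↑(Φ J.val) from rfl, hdiffset, h2,
          Set.image_singleton]
      · exact e.map_adj_iff.mpr ((disjUnion'_nK1_adj H m _ _).mpr ⟨u', v', rfl, rfl, huv⟩)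
  let ψ : TS H j →g TS F (j + m) := ⟨φ, fun h => hφadj _ _ h⟩
  have hψinj : Function.Injective ψ := by
    intro I J h
    exact Subtype.ext (hΦinj (congrArg Subtype.val h))
  exact ⟨ψ v, w.map ψ, hw.map hψinj⟩

lemma cycle_twoK2 : HasCycle (TS twoK2 2) := by
  refine ⟨⟨{0,2}, by decide⟩,
    .cons (TS_adj_of _ _ ⟨{1,2}, by decide⟩ 0 1 (by decide) (by decide) (by decide))
    (.cons (TS_adj_of _ _ ⟨{1,3}, by decide⟩ 2 3 (by decide) (by decide) (by decide))
    (.cons (TS_adj_of _ _ ⟨{0,3}, by decide⟩ 1 0 (by decide) (by decide) (by decide))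
    (.cons (TS_adj_of _ _ ⟨{0,2}, by decide⟩ 3 2 (by decide) (by decide) (by decide))
    .nil))), ?_⟩
  rw [SimpleGraph.Walk.isCycle_def]
  refine ⟨?_, by simp, ?_⟩
  · rw [SimpleGraph.Walk.isTrail_def]
    simp only [SimpleGraph.Walk.edges_cons, SimpleGraph.Walk.edges_nil]
    decide
  · simp only [SimpleGraph.Walk.support_cons, SimpleGraph.Walk.support_nil, List.tail_cons]
    decide

section D222
private abbrev u0 : Fin 2 ⊕ Fin 2 ⊕ Fin 2 := Sum.inl 0
private abbrev u1 : Fin 2 ⊕ Fin 2 ⊕ Fin 2 := Sum.inl 1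
private abbrev q0 : Fin 2 ⊕ Fin 2 ⊕ Fin 2 := Sum.inr (Sum.inl 0)
private abbrev q1 : Fin 2 ⊕ Fin 2 ⊕ Fin 2 := Sum.inr (Sum.inl 1)
private abbrev v0 : Fin 2 ⊕ Fin 2 ⊕ Fin 2 := Sum.inr (Sum.inr 0)
private abbrev v1 : Fin 2 ⊕ Fin 2 ⊕ Fin 2 := Sum.inr (Sum.inr 1)

lemma cycle_D222 : HasCycle (TS (D 2 2 2) 2) := by
  refine ⟨⟨{u0,v0}, by decide⟩,
    .cons (TS_adj_of _ _ ⟨{q0,v0}, by decide⟩ u0 q0 (by decide) (by decide) (by decide))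
    (.cons (TS_adj_of _ _ ⟨{u1,v0}, by decide⟩ q0 u1 (by decide) (by decide) (by decide))
    (.cons (TS_adj_of _ _ ⟨{u1,q1}, by decide⟩ v0 q1 (by decide) (by decide) (by decide))
    (.cons (TS_adj_of _ _ ⟨{u1,v1}, by decide⟩ q1 v1 (by decide) (by decide) (by decide))
    (.cons (TS_adj_of _ _ ⟨{q0,v1}, by decide⟩ u1 q0 (by decide) (by decide) (by decide))
    (.cons (TS_adj_of _ _ ⟨{u0,v1}, by decide⟩ q0 u0 (by decide) (by decide) (by decide))
    (.cons (TS_adj_of _ _ ⟨{u0,q1}, by decide⟩ v1 q1 (by decide) (by decide) (by decide))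
    (.cons (TS_adj_of _ _ ⟨{u0,v0}, by decide⟩ q1 v0 (by decide) (by decide) (by decide))
    .nil))))))), ?_⟩
  rw [SimpleGraph.Walk.isCycle_def]
  refine ⟨?_, by simp, ?_⟩
  · rw [SimpleGraph.Walk.isTrail_def]
    simp only [SimpleGraph.Walk.edges_cons, SimpleGraph.Walk.edges_nil]
    decide
  · simp only [SimpleGraph.Walk.support_cons, SimpleGraph.Walk.support_nil, List.tail_cons]
    decide
end D222

section D242
private abbrev a0 : Fin 2 ⊕ Fin 4 ⊕ Fin 2 := Sum.inl 0
private abbrev a1 : Fin 2 ⊕ Fin 4 ⊕ Fin 2 := Sum.inl 1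
private abbrev p0 : Fin 2 ⊕ Fin 4 ⊕ Fin 2 := Sum.inr (Sum.inl 0)
private abbrev p1 : Fin 2 ⊕ Fin 4 ⊕ Fin 2 := Sum.inr (Sum.inl 1)
private abbrev p2 : Fin 2 ⊕ Fin 4 ⊕ Fin 2 := Sum.inr (Sum.inl 2)
private abbrev p3 : Fin 2 ⊕ Fin 4 ⊕ Fin 2 := Sum.inr (Sum.inl 3)
private abbrev b0 : Fin 2 ⊕ Fin 4 ⊕ Fin 2 := Sum.inr (Sum.inr 0)
private abbrev b1 : Fin 2 ⊕ Fin 4 ⊕ Fin 2 := Sum.inr (Sum.inr 1)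

lemma cycle_D242 : HasCycle (TS (D 2 4 2) 3) := by
  refine ⟨⟨{p1,a1,b1}, by decide⟩,
    .cons (TS_adj_of _ _ ⟨{p2,a1,b1}, by decide⟩ p1 p2 (by decide) (by decide) (by decide))
    (.cons (TS_adj_of _ _ ⟨{p0,p2,b1}, by decide⟩ a1 p0 (by decide) (by decide) (by decide))
    (.cons (TS_adj_of _ _ ⟨{p2,a0,b1}, by decide⟩ p0 a0 (by decide) (by decide) (by decide))
    (.cons (TS_adj_of _ _ ⟨{p1,a0,b1}, by decide⟩ p2 p1 (by decide) (by decide) (by decide))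
    (.cons (TS_adj_of _ _ ⟨{p1,p3,a0}, by decide⟩ b1 p3 (by decide) (by decide) (by decide))
    (.cons (TS_adj_of _ _ ⟨{p1,a0,b0}, by decide⟩ p3 b0 (by decide) (by decide) (by decide))
    (.cons (TS_adj_of _ _ ⟨{p2,a0,b0}, by decide⟩ p1 p2 (by decide) (by decide) (by decide))
    (.cons (TS_adj_of _ _ ⟨{p0,p2,b0}, by decide⟩ a0 p0 (by decide) (by decide) (by decide))
    (.cons (TS_adj_of _ _ ⟨{p2,a1,b0}, by decide⟩ p0 a1 (by decide) (by decide) (by decide))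
    (.cons (TS_adj_of _ _ ⟨{p1,a1,b0}, by decide⟩ p2 p1 (by decide) (by decide) (by decide))
    (.cons (TS_adj_of _ _ ⟨{p1,p3,a1}, by decide⟩ b0 p3 (by decide) (by decide) (by decide))
    (.cons (TS_adj_of _ _ ⟨{p1,a1,b1}, by decide⟩ p3 b1 (by decide) (by decide) (by decide))
    .nil))))))))))), ?_⟩
  rw [SimpleGraph.Walk.isCycle_def]
  refine ⟨?_, by simp, ?_⟩
  · rw [SimpleGraph.Walk.isTrail_def]
    simp only [SimpleGraph.Walk.edges_cons, SimpleGraph.Walk.edges_nil]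
    decide
  · simp only [SimpleGraph.Walk.support_cons, SimpleGraph.Walk.support_nil, List.tail_cons]
    decide
end D242

theorem stmt10 {V : Type*} [Fintype V] (k : ℕ) (hk : 4 ≤ k)
    (F : SimpleGraph V) (hF : F.IsAcyclic)
    (h : Nonempty (disjUnion' twoK2 (nK1 (k - 2)) ↪g F) ∨
      Nonempty (disjUnion' (D 2 2 2) (nK1 (k - 2)) ↪g F) ∨
      Nonempty (disjUnion' (D 2 4 2) (nK1 (k - 3)) ↪g F)) :
    HasCycle (TS F k) := by
  classical
  rcases h with he | he | he <;> obtain ⟨e⟩ := he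
  · have := lift_cycle F twoK2 (k - 2) 2 e cycle_twoK2
    rwa [show 2 + (k - 2) = k by omega] at this
  · have := lift_cycle F (D 2 2 2) (k - 2) 2 e cycle_D222
    rwa [show 2 + (k - 2) = k by omega] at this
  · have := lift_cycle F (D 2 4 2) (k - 3) 3 e cycle_D242
    rwa [show 3 + (k - 3) = k by omega] at this
end

section
/- Let G_1 and G_2 be graphs whose vertex sets intersect in a set W inducing the same subgraph H in both, and let H(G_1,G_2) be the graph on V(G_1) ∪ V(G_2) whose edges are E(G_1) ∪ E(G_2) together with all edges between V(G_1)∖W and V(G_2)∖W. Then for k ≥ 2, every independent set of size k in H(G_1,G_2) is an independent set of G_1 or of G_2, and TS_k(H(G_1,G_2)) is the union of TS_k(G_1), TS_k(G_2), and the edges S_1S_2 over all pairs of size-k independent sets S_1 of G_1, S_2 of G_2 satisfying |S_1 ∩ W| = |S_2 ∩ W| = |S_1 ∩ S_2| = k−1. -/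
open SimpleGraph

/-- `I` is a size-`k` independent set of the labelled graph `G` with vertex set `Vs`. -/
def IsIndepK {W : Type*} (G : SimpleGraph W) (Vs : Set W) (k : ℕ) (I : Finset W) : Prop :=
  (I : Set W) ⊆ Vs ∧ I.card = k ∧ ∀ u ∈ I, ∀ v ∈ I, ¬ G.Adj u v

/-- Token-sliding adjacency between size-`k` independent sets of the labelled graph `G`
with vertex set `Vs`. -/
def TSAdj {W : Type*} (G : SimpleGraph W) (Vs : Set W) (k : ℕ) (I J : Finset W) : Prop :=
  IsIndepK G Vs k I ∧ IsIndepK G Vs k J ∧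
    ∃ u v, (I : Set W) \ (J : Set W) = {u} ∧ (J : Set W) \ (I : Set W) = {v} ∧ G.Adj u v

/-- The `H`-join of the labelled graphs `G₁` (vertex set `V₁`) and `G₂` (vertex set `V₂`),
where `H` is the common induced subgraph on `V₁ ∩ V₂`: all edges of `G₁` and `G₂`, plus all
edges between `V₁ \ V₂` and `V₂ \ V₁`. -/
def hJoin {W : Type*} (G₁ G₂ : SimpleGraph W) (V₁ V₂ : Set W) : SimpleGraph W :=
  SimpleGraph.fromRel fun a b =>
    G₁.Adj a b ∨ G₂.Adj a b ∨ (a ∈ V₁ \ V₂ ∧ b ∈ V₂ \ V₁)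

/-- The crossing condition of Proposition 7: `S₁` is a size-`k` independent set of `G₁`,
`S₂` one of `G₂`, and `|S₁ ∩ W| = |S₂ ∩ W| = |S₁ ∩ S₂| = k - 1` where `W = V₁ ∩ V₂`. -/
def Crossing {W : Type*} (G₁ G₂ : SimpleGraph W) (V₁ V₂ : Set W) (k : ℕ)
    (S₁ S₂ : Finset W) : Prop :=
  IsIndepK G₁ V₁ k S₁ ∧ IsIndepK G₂ V₂ k S₂ ∧
    ((S₁ : Set W) ∩ (V₁ ∩ V₂)).ncard = k - 1 ∧
    ((S₂ : Set W) ∩ (V₁ ∩ V₂)).ncard = k - 1 ∧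
    ((S₁ : Set W) ∩ (S₂ : Set W)).ncard = k - 1

section Aux

variable {W : Type*} {G₁ G₂ : SimpleGraph W} {V₁ V₂ : Set W}

lemma hJoin_adj (a b : W) : (hJoin G₁ G₂ V₁ V₂).Adj a b ↔ a ≠ b ∧
    (G₁.Adj a b ∨ G₂.Adj a b ∨ (a ∈ V₁ \ V₂ ∧ b ∈ V₂ \ V₁) ∨ (b ∈ V₁ \ V₂ ∧ a ∈ V₂ \ V₁)) := by
  rw [hJoin, SimpleGraph.fromRel_adj]
  have c1 : G₁.Adj b a ↔ G₁.Adj a b := G₁.adj_comm b a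
  have c2 : G₂.Adj b a ↔ G₂.Adj a b := G₂.adj_comm b a
  tauto

lemma hJoin_comm : hJoin G₁ G₂ V₁ V₂ = hJoin G₂ G₁ V₂ V₁ := by
  ext a b
  rw [hJoin_adj, hJoin_adj]
  have c1 : G₁.Adj b a ↔ G₁.Adj a b := G₁.adj_comm b a
  tauto

lemma adj_of_left {a b : W} (h : G₁.Adj a b) : (hJoin G₁ G₂ V₁ V₂).Adj a b := by
  rw [hJoin_adj]; exact ⟨h.ne, Or.inl h⟩

lemma adj_of_right {a b : W} (h : G₂.Adj a b) : (hJoin G₁ G₂ V₁ V₂).Adj a b := by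
  rw [hJoin_adj]; exact ⟨h.ne, Or.inr (Or.inl h)⟩

lemma adj_left (hE₂ : ∀ a b, G₂.Adj a b → a ∈ V₂ ∧ b ∈ V₂)
    (hcons : ∀ a b, a ∈ V₁ ∩ V₂ → b ∈ V₁ ∩ V₂ → (G₁.Adj a b ↔ G₂.Adj a b))
    {a b : W} (ha : a ∈ V₁) (hb : b ∈ V₁) (h : (hJoin G₁ G₂ V₁ V₂).Adj a b) : G₁.Adj a b := by
  rw [hJoin_adj] at h
  obtain ⟨hne, h | h | ⟨h1, h2⟩ | ⟨h1, h2⟩⟩ := h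
  · exact h
  · exact (hcons a b ⟨ha, (hE₂ a b h).1⟩ ⟨hb, (hE₂ a b h).2⟩).mpr h
  · exact absurd hb h2.2
  · exact absurd ha h2.2

lemma indep_join_of_left (hE₂ : ∀ a b, G₂.Adj a b → a ∈ V₂ ∧ b ∈ V₂)
    (hcons : ∀ a b, a ∈ V₁ ∩ V₂ → b ∈ V₁ ∩ V₂ → (G₁.Adj a b ↔ G₂.Adj a b))
    {I : Finset W} (hI : (I : Set W) ⊆ V₁) (h : ∀ u ∈ I, ∀ v ∈ I, ¬ G₁.Adj u v) :
    ∀ u ∈ I, ∀ v ∈ I, ¬ (hJoin G₁ G₂ V₁ V₂).Adj u v :=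
  fun u hu v hv hadj => h u hu v hv (adj_left hE₂ hcons (hI hu) (hI hv) hadj)

lemma hcons_swap (hcons : ∀ a b, a ∈ V₁ ∩ V₂ → b ∈ V₁ ∩ V₂ → (G₁.Adj a b ↔ G₂.Adj a b)) :
    ∀ a b, a ∈ V₂ ∩ V₁ → b ∈ V₂ ∩ V₁ → (G₂.Adj a b ↔ G₁.Adj a b) :=
  fun a b ha hb => (hcons a b ⟨ha.2, ha.1⟩ ⟨hb.2, hb.1⟩).symm

lemma indep_join_of_right (hE₁ : ∀ a b, G₁.Adj a b → a ∈ V₁ ∧ b ∈ V₁)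
    (hcons : ∀ a b, a ∈ V₁ ∩ V₂ → b ∈ V₁ ∩ V₂ → (G₁.Adj a b ↔ G₂.Adj a b))
    {I : Finset W} (hI : (I : Set W) ⊆ V₂) (h : ∀ u ∈ I, ∀ v ∈ I, ¬ G₂.Adj u v) :
    ∀ u ∈ I, ∀ v ∈ I, ¬ (hJoin G₁ G₂ V₁ V₂).Adj u v := by
  rw [hJoin_comm]
  exact indep_join_of_left hE₁ (hcons_swap hcons) hI h

lemma part1 (hE₂ : ∀ a b, G₂.Adj a b → a ∈ V₂ ∧ b ∈ V₂)
    (hcover : V₁ ∪ V₂ = Set.univ)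
    (hcons : ∀ a b, a ∈ V₁ ∩ V₂ → b ∈ V₁ ∩ V₂ → (G₁.Adj a b ↔ G₂.Adj a b))
    {I : Finset W} (h : ∀ u ∈ I, ∀ v ∈ I, ¬ (hJoin G₁ G₂ V₁ V₂).Adj u v) :
    ((I : Set W) ⊆ V₁ ∧ ∀ u ∈ I, ∀ v ∈ I, ¬ G₁.Adj u v) ∨
    ((I : Set W) ⊆ V₂ ∧ ∀ u ∈ I, ∀ v ∈ I, ¬ G₂.Adj u v) := by
  have hmem : ∀ x : W, x ∈ V₁ ∨ x ∈ V₂ := by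
    intro x
    have : x ∈ V₁ ∪ V₂ := by rw [hcover]; exact Set.mem_univ x
    exact this
  by_cases hc : (I : Set W) ⊆ V₁
  · exact Or.inl ⟨hc, fun u hu v hv hadj => h u hu v hv (adj_of_left hadj)⟩
  · obtain ⟨x, hxI, hxV₁⟩ : ∃ x, x ∈ I ∧ x ∉ V₁ := by
      rw [Set.not_subset] at hc
      obtain ⟨x, hx, hx'⟩ := hc
      exact ⟨x, hx, hx'⟩
    have hxV₂ : x ∈ V₂ := (hmem x).resolve_left hxV₁
    have hsub : (I : Set W) ⊆ V₂ := by
      intro y hy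
      by_contra hyV₂
      have hyV₁ : y ∈ V₁ := (hmem y).resolve_right hyV₂
      have hne : y ≠ x := fun he => hxV₁ (he ▸ hyV₁)
      exact h y hy x hxI ((hJoin_adj y x).mpr
        ⟨hne, Or.inr (Or.inr (Or.inl ⟨⟨hyV₁, hyV₂⟩, ⟨hxV₂, hxV₁⟩⟩))⟩)
    exact Or.inr ⟨hsub, fun u hu v hv hadj => h u hu v hv (adj_of_right hadj)⟩

lemma tsadj_symm {G : SimpleGraph W} {Vs : Set W} {k : ℕ} {I J : Finset W}
    (h : TSAdj G Vs k I J) : TSAdj G Vs k J I := by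
  obtain ⟨hI, hJ, u, v, h1, h2, h3⟩ := h
  exact ⟨hJ, hI, v, u, h2, h1, h3.symm⟩

lemma cross_case [DecidableEq W] {k : ℕ} {I J : Finset W} {u v : W}
    (hI : IsIndepK G₁ V₁ k I) (hJ : IsIndepK G₂ V₂ k J)
    (hIJ : I \ J = {u}) (hJI : J \ I = {v}) (hu : u ∉ V₂) (hv : v ∉ V₁) :
    Crossing G₁ G₂ V₁ V₂ k I J := by
  have hcI : I.card = k := hI.2.1
  have h1 : (I \ J).card = 1 := by rw [hIJ]; simp
  have hcard := Finset.card_sdiff_add_card_inter I J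
  have hk1 : (I ∩ J).card = k - 1 := by omega
  have e1 : (I : Set W) ∩ (V₁ ∩ V₂) = ((I ∩ J : Finset W) : Set W) := by
    ext x
    simp only [Set.mem_inter_iff, Finset.coe_inter, Finset.mem_coe]
    constructor
    · rintro ⟨hxI, hxV₁, hxV₂⟩
      refine ⟨hxI, ?_⟩
      by_contra hxJ
      have : x ∈ I \ J := Finset.mem_sdiff.mpr ⟨hxI, hxJ⟩
      rw [hIJ, Finset.mem_singleton] at this
      exact hu (this ▸ hxV₂)
    · rintro ⟨hxI, hxJ⟩
      exact ⟨hxI, hI.1 hxI, hJ.1 hxJ⟩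
  have e2 : (J : Set W) ∩ (V₁ ∩ V₂) = ((I ∩ J : Finset W) : Set W) := by
    ext x
    simp only [Set.mem_inter_iff, Finset.coe_inter, Finset.mem_coe]
    constructor
    · rintro ⟨hxJ, hxV₁, hxV₂⟩
      refine ⟨?_, hxJ⟩
      by_contra hxI
      have : x ∈ J \ I := Finset.mem_sdiff.mpr ⟨hxJ, hxI⟩
      rw [hJI, Finset.mem_singleton] at this
      exact hv (this ▸ hxV₁)
    · rintro ⟨hxI, hxJ⟩
      exact ⟨hxJ, hI.1 hxI, hJ.1 hxJ⟩
  have e3 : (I : Set W) ∩ (J : Set W) = ((I ∩ J : Finset W) : Set W) := by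
    rw [Finset.coe_inter]
  refine ⟨hI, hJ, ?_, ?_, ?_⟩ <;>
    rw [show k - 1 = (I ∩ J).card from hk1.symm]
  · rw [e1, Set.ncard_coe_finset]
  · rw [e2, Set.ncard_coe_finset]
  · rw [e3, Set.ncard_coe_finset]

lemma crossing_tsadj [DecidableEq W] {k : ℕ} (hk : 2 ≤ k)
    (hE₁ : ∀ a b, G₁.Adj a b → a ∈ V₁ ∧ b ∈ V₁)
    (hE₂ : ∀ a b, G₂.Adj a b → a ∈ V₂ ∧ b ∈ V₂)
    (hcons : ∀ a b, a ∈ V₁ ∩ V₂ → b ∈ V₁ ∩ V₂ → (G₁.Adj a b ↔ G₂.Adj a b))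
    {S₁ S₂ : Finset W} (hc : Crossing G₁ G₂ V₁ V₂ k S₁ S₂) :
    TSAdj (hJoin G₁ G₂ V₁ V₂) Set.univ k S₁ S₂ := by
  obtain ⟨h1, h2, c1, c2, c3⟩ := hc
  have hcS1 : S₁.card = k := h1.2.1
  have hcS2 : S₂.card = k := h2.2.1
  have hk1 : (S₁ ∩ S₂).card = k - 1 := by
    rw [← Set.ncard_coe_finset, Finset.coe_inter] at *
    exact c3
  have hd1 : (S₁ \ S₂).card = 1 := by
    have := Finset.card_sdiff_add_card_inter S₁ S₂
    omega
  have hd2 : (S₂ \ S₁).card = 1 := by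
    have := Finset.card_sdiff_add_card_inter S₂ S₁
    rw [Finset.inter_comm] at this
    omega
  obtain ⟨u, hu⟩ := Finset.card_eq_one.mp hd1
  obtain ⟨v, hv⟩ := Finset.card_eq_one.mp hd2
  have huI : u ∈ S₁ ∧ u ∉ S₂ := by
    have : u ∈ S₁ \ S₂ := by rw [hu]; exact Finset.mem_singleton_self u
    exact Finset.mem_sdiff.mp this
  have hvJ : v ∈ S₂ ∧ v ∉ S₁ := by
    have : v ∈ S₂ \ S₁ := by rw [hv]; exact Finset.mem_singleton_self v
    exact Finset.mem_sdiff.mp this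
  have hsub12 : ((S₁ ∩ S₂ : Finset W) : Set W) ⊆ (S₁ : Set W) ∩ (V₁ ∩ V₂) := by
    intro x hx
    rw [Finset.coe_inter] at hx
    exact ⟨hx.1, h1.1 hx.1, h2.1 hx.2⟩
  have hsub21 : ((S₁ ∩ S₂ : Finset W) : Set W) ⊆ (S₂ : Set W) ∩ (V₁ ∩ V₂) := by
    intro x hx
    rw [Finset.coe_inter] at hx
    exact ⟨hx.2, h1.1 hx.1, h2.1 hx.2⟩
  have heq1 : ((S₁ ∩ S₂ : Finset W) : Set W) = (S₁ : Set W) ∩ (V₁ ∩ V₂) := by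
    apply Set.eq_of_subset_of_ncard_le hsub12
    rw [c1, Set.ncard_coe_finset, hk1]
  have heq2 : ((S₁ ∩ S₂ : Finset W) : Set W) = (S₂ : Set W) ∩ (V₁ ∩ V₂) := by
    apply Set.eq_of_subset_of_ncard_le hsub21
    rw [c2, Set.ncard_coe_finset, hk1]
  have huV₂ : u ∉ V₂ := by
    intro hu2
    have : u ∈ ((S₁ ∩ S₂ : Finset W) : Set W) := by
      rw [heq1]; exact ⟨huI.1, h1.1 huI.1, hu2⟩
    rw [Finset.coe_inter] at this
    exact huI.2 this.2
  have hvV₁ : v ∉ V₁ := by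
    intro hv1
    have : v ∈ ((S₁ ∩ S₂ : Finset W) : Set W) := by
      rw [heq2]; exact ⟨hvJ.1, hv1, h2.1 hvJ.1⟩
    rw [Finset.coe_inter] at this
    exact hvJ.2 this.1
  refine ⟨⟨Set.subset_univ _, hcS1, indep_join_of_left hE₂ hcons h1.1 h1.2.2⟩,
    ⟨Set.subset_univ _, hcS2, indep_join_of_right hE₁ hcons h2.1 h2.2.2⟩, u, v, ?_, ?_, ?_⟩
  · rw [← Finset.coe_sdiff, hu, Finset.coe_singleton]
  · rw [← Finset.coe_sdiff, hv, Finset.coe_singleton]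
  · rw [hJoin_adj]
    have hne : u ≠ v := fun he => huV₂ (he ▸ h2.1 hvJ.1)
    exact ⟨hne, Or.inr (Or.inr (Or.inl ⟨⟨h1.1 huI.1, huV₂⟩, ⟨h2.1 hvJ.1, hvV₁⟩⟩))⟩

end Aux

theorem stmt11 {W : Type*} (G₁ G₂ : SimpleGraph W) (V₁ V₂ : Set W) (k : ℕ) (hk : 2 ≤ k)
    (hE₁ : ∀ a b, G₁.Adj a b → a ∈ V₁ ∧ b ∈ V₁)
    (hE₂ : ∀ a b, G₂.Adj a b → a ∈ V₂ ∧ b ∈ V₂)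
    (hcover : V₁ ∪ V₂ = Set.univ)
    (hcons : ∀ a b, a ∈ V₁ ∩ V₂ → b ∈ V₁ ∩ V₂ → (G₁.Adj a b ↔ G₂.Adj a b)) :
    (∀ I : Finset W, I.card = k → (∀ u ∈ I, ∀ v ∈ I, ¬ (hJoin G₁ G₂ V₁ V₂).Adj u v) →
      IsIndepK G₁ V₁ k I ∨ IsIndepK G₂ V₂ k I) ∧
    (∀ I J : Finset W, TSAdj (hJoin G₁ G₂ V₁ V₂) Set.univ k I J ↔
      (TSAdj G₁ V₁ k I J ∨ TSAdj G₂ V₂ k I J ∨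
        Crossing G₁ G₂ V₁ V₂ k I J ∨ Crossing G₁ G₂ V₁ V₂ k J I)) := by
  classical
  have hmem : ∀ x : W, x ∈ V₁ ∨ x ∈ V₂ := by
    intro x
    have : x ∈ V₁ ∪ V₂ := by rw [hcover]; exact Set.mem_univ x
    exact this
  constructor
  · intro I hcard hind
    rcases part1 hE₂ hcover hcons hind with ⟨hs, hi⟩ | ⟨hs, hi⟩
    · exact Or.inl ⟨hs, hcard, hi⟩
    · exact Or.inr ⟨hs, hcard, hi⟩
  · intro I J
    constructor
    · rintro ⟨hI, hJ, u, v, hdIJ, hdJI, hadj⟩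
      have hIJf : I \ J = {u} := by
        apply Finset.coe_injective
        rw [Finset.coe_sdiff, Finset.coe_singleton]
        exact hdIJ
      have hJIf : J \ I = {v} := by
        apply Finset.coe_injective
        rw [Finset.coe_sdiff, Finset.coe_singleton]
        exact hdJI
      have huI : u ∈ I ∧ u ∉ J := by
        have : u ∈ I \ J := by rw [hIJf]; exact Finset.mem_singleton_self u
        exact Finset.mem_sdiff.mp this
      have hvJ : v ∈ J ∧ v ∉ I := by
        have : v ∈ J \ I := by rw [hJIf]; exact Finset.mem_singleton_self v
        exact Finset.mem_sdiff.mp this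
      -- helper: closing the "both in G₁" case
      have case1 : (I : Set W) ⊆ V₁ → (∀ a ∈ I, ∀ b ∈ I, ¬ G₁.Adj a b) →
          (J : Set W) ⊆ V₁ → (∀ a ∈ J, ∀ b ∈ J, ¬ G₁.Adj a b) → TSAdj G₁ V₁ k I J := by
        intro hIs hIi hJs hJi
        exact ⟨⟨hIs, hI.2.1, hIi⟩, ⟨hJs, hJ.2.1, hJi⟩, u, v, hdIJ, hdJI,
          adj_left hE₂ hcons (hIs huI.1) (hJs hvJ.1) hadj⟩
      have case2 : (I : Set W) ⊆ V₂ → (∀ a ∈ I, ∀ b ∈ I, ¬ G₂.Adj a b) →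
          (J : Set W) ⊆ V₂ → (∀ a ∈ J, ∀ b ∈ J, ¬ G₂.Adj a b) → TSAdj G₂ V₂ k I J := by
        intro hIs hIi hJs hJi
        refine ⟨⟨hIs, hI.2.1, hIi⟩, ⟨hJs, hJ.2.1, hJi⟩, u, v, hdIJ, hdJI, ?_⟩
        have := hadj
        rw [hJoin_comm] at this
        exact adj_left hE₁ (hcons_swap hcons) (hIs huI.1) (hJs hvJ.1) this
      -- derive G₂-independence of I from containment in V₂, etc.
      have indI2 : (I : Set W) ⊆ V₂ → ∀ a ∈ I, ∀ b ∈ I, ¬ G₂.Adj a b := by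
        intro hs a ha b hb hab
        exact hI.2.2 a ha b hb (adj_of_right hab)
      have indI1 : (I : Set W) ⊆ V₁ → ∀ a ∈ I, ∀ b ∈ I, ¬ G₁.Adj a b := by
        intro hs a ha b hb hab
        exact hI.2.2 a ha b hb (adj_of_left hab)
      have indJ2 : (J : Set W) ⊆ V₂ → ∀ a ∈ J, ∀ b ∈ J, ¬ G₂.Adj a b := by
        intro hs a ha b hb hab
        exact hJ.2.2 a ha b hb (adj_of_right hab)
      have indJ1 : (J : Set W) ⊆ V₁ → ∀ a ∈ J, ∀ b ∈ J, ¬ G₁.Adj a b := by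
        intro hs a ha b hb hab
        exact hJ.2.2 a ha b hb (adj_of_left hab)
      -- I ⊆ Vᵢ from near-containment
      have subI : ∀ (V : Set W), u ∈ V → (J : Set W) ⊆ V → (I : Set W) ⊆ V := by
        intro V huV hJV x hx
        by_cases hxu : x = u
        · exact hxu ▸ huV
        · have : x ∈ J := by
            by_contra hxJ
            have : x ∈ I \ J := Finset.mem_sdiff.mpr ⟨hx, hxJ⟩
            rw [hIJf, Finset.mem_singleton] at this
            exact hxu this
          exact hJV this
      have subJ : ∀ (V : Set W), v ∈ V → (I : Set W) ⊆ V → (J : Set W) ⊆ V := by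
        intro V hvV hIV x hx
        by_cases hxv : x = v
        · exact hxv ▸ hvV
        · have : x ∈ I := by
            by_contra hxI
            have : x ∈ J \ I := Finset.mem_sdiff.mpr ⟨hx, hxI⟩
            rw [hJIf, Finset.mem_singleton] at this
            exact hxv this
          exact hIV this
      rcases part1 hE₂ hcover hcons hI.2.2 with ⟨hIs, hIi⟩ | ⟨hIs, hIi⟩ <;>
        rcases part1 hE₂ hcover hcons hJ.2.2 with ⟨hJs, hJi⟩ | ⟨hJs, hJi⟩
      · exact Or.inl (case1 hIs hIi hJs hJi)
      · -- I in G₁, J in G₂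
        by_cases hu2 : u ∈ V₂
        · have hIs2 := subI V₂ hu2 hJs
          exact Or.inr (Or.inl (case2 hIs2 (indI2 hIs2) hJs hJi))
        · by_cases hv1 : v ∈ V₁
          · have hJs1 := subJ V₁ hv1 hIs
            exact Or.inl (case1 hIs hIi hJs1 (indJ1 hJs1))
          · exact Or.inr (Or.inr (Or.inl
              (cross_case ⟨hIs, hI.2.1, hIi⟩ ⟨hJs, hJ.2.1, hJi⟩ hIJf hJIf hu2 hv1)))
      · -- I in G₂, J in G₁
        by_cases hu1 : u ∈ V₁
        · have hIs1 := subI V₁ hu1 hJs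
          exact Or.inl (case1 hIs1 (indI1 hIs1) hJs hJi)
        · by_cases hv2 : v ∈ V₂
          · have hJs2 := subJ V₂ hv2 hIs
            exact Or.inr (Or.inl (case2 hIs hIi hJs2 (indJ2 hJs2)))
          · exact Or.inr (Or.inr (Or.inr
              (cross_case ⟨hJs, hJ.2.1, hJi⟩ ⟨hIs, hI.2.1, hIi⟩ hJIf hIJf hv2 hu1)))
      · exact Or.inr (Or.inl (case2 hIs hIi hJs hJi))
    · rintro (⟨hI, hJ, u, v, h1, h2, h3⟩ | ⟨hI, hJ, u, v, h1, h2, h3⟩ | h | h)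
      · exact ⟨⟨Set.subset_univ _, hI.2.1, indep_join_of_left hE₂ hcons hI.1 hI.2.2⟩,
          ⟨Set.subset_univ _, hJ.2.1, indep_join_of_left hE₂ hcons hJ.1 hJ.2.2⟩,
          u, v, h1, h2, adj_of_left h3⟩
      · exact ⟨⟨Set.subset_univ _, hI.2.1, indep_join_of_right hE₁ hcons hI.1 hI.2.2⟩,
          ⟨Set.subset_univ _, hJ.2.1, indep_join_of_right hE₁ hcons hJ.1 hJ.2.2⟩,
          u, v, h1, h2, adj_of_right h3⟩
      · exact crossing_tsadj hk hE₁ hE₂ hcons h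
      · exact tsadj_symm (crossing_tsadj hk hE₁ hE₂ hcons h)
end

section
/- For every k ≥ 2 and every k-ary tree T (a rooted tree in which every node has at most k children), there exists a graph G such that TS_{k+1}(G) is isomorphic to T. -/
open SimpleGraph

section Aux


/-- Every finite tree admits a root of degree ≤ 1, a parent map and a depth map. -/
lemma exists_rooted {V : Type*} [Fintype V] (T : SimpleGraph V) [DecidableRel T.Adj]
    (hT : T.IsTree) :
    ∃ (r : V) (parent : V → V) (depth : V → ℕ),
      T.degree r ≤ 1 ∧
      depth r = 0 ∧
      (∀ v, depth v = 0 → v = r) ∧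
      (∀ v, v ≠ r → T.Adj v (parent v) ∧ depth v = depth (parent v) + 1) ∧
      (∀ v w, T.Adj v w → (v ≠ r ∧ parent v = w) ∨ (w ≠ r ∧ parent w = v)) := by
  classical
  have hne : Nonempty V := hT.isConnected.nonempty
  by_cases hsub : ∀ v w : V, v = w
  · obtain ⟨r⟩ := hne
    refine ⟨r, id, fun _ => 0, ?_, rfl, fun v _ => hsub v r, ?_, ?_⟩
    · have : T.neighborFinset r = ∅ := by
        ext w; simp only [mem_neighborFinset, Finset.notMem_empty, iff_false]
        intro h; exact h.ne (hsub r w)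
      rw [degree, this]; simp
    · intro v hv; exact absurd (hsub v r) hv
    · intro v w h; exact absurd (hsub v w) h.ne
  · -- there exists a leaf
    push_neg at hsub
    obtain ⟨v₀, w₀, hvw⟩ := hsub
    -- every vertex has degree ≥ 1
    have hdeg1 : ∀ v : V, 1 ≤ T.degree v := by
      intro v
      have : ∃ w, w ≠ v := by
        rcases eq_or_ne v v₀ with rfl | h
        · exact ⟨w₀, Ne.symm hvw⟩
        · exact ⟨v₀, Ne.symm h⟩
      obtain ⟨w, hw⟩ := this
      have hr : T.Reachable v w := hT.isConnected.preconnected v w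
      obtain ⟨p⟩ := hr
      have : ∃ u, T.Adj v u := by
        cases p with
        | nil => exact absurd rfl (Ne.symm hw)
        | cons h q => exact ⟨_, h⟩
      exact (T.degree_pos_iff_exists_adj v).2 this
    have hleaf : ∃ r : V, T.degree r = 1 := by
      by_contra hno
      push_neg at hno
      have h2 : ∀ v, 2 ≤ T.degree v := by
        intro v
        have := hdeg1 v
        have := hno v
        omega
      have hsum := T.sum_degrees_eq_twice_card_edges
      have hcard := hT.card_edgeFinset
      have hge : 2 * Fintype.card V ≤ ∑ v, T.degree v := by
        calc 2 * Fintype.card V = ∑ _v : V, 2 := by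
              rw [Finset.sum_const, Finset.card_univ]; ring
          _ ≤ ∑ v, T.degree v := Finset.sum_le_sum fun v _ => h2 v
      omega
    obtain ⟨r, hr⟩ := hleaf
    -- unique paths to r
    have hEU := hT.existsUnique_path
    have hP : ∀ v : V, ∃ p : T.Walk v r, p.IsPath := fun v => ⟨(hEU v r).choose, (hEU v r).choose_spec.1⟩
    set P : ∀ v : V, T.Walk v r := fun v => (hEU v r).choose with hPdef
    have hPpath : ∀ v, (P v).IsPath := fun v => (hEU v r).choose_spec.1
    have hPuniq : ∀ (v : V) (q : T.Walk v r), q.IsPath → q = P v :=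
      fun v q hq => (hEU v r).unique hq (hPpath v)
    refine ⟨r, fun v => (P v).getVert 1, fun v => (P v).length, le_of_eq hr, ?_, ?_, ?_, ?_⟩
    · -- depth r = 0
      have : (Walk.nil : T.Walk r r) = P r := hPuniq r Walk.nil Walk.IsPath.nil
      show (P r).length = 0
      rw [← this]; rfl
    · intro v hv
      exact (Walk.eq_of_length_eq_zero (hv : (P v).length = 0))
    · intro v hv
      obtain ⟨u, hadj, q, hq⟩ := Walk.exists_eq_cons_of_ne hv (P v)
      have hqpath : q.IsPath := by
        have := hPpath v; rw [hq] at this; exact this.of_cons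
      have hqP : q = P u := hPuniq u q hqpath
      constructor
      · show T.Adj v ((P v).getVert 1)
        rw [hq, Walk.getVert_cons _ _ one_ne_zero, Nat.sub_self, Walk.getVert_zero]; exact hadj
      · show (P v).length = (P ((P v).getVert 1)).length + 1
        rw [hq, Walk.getVert_cons _ _ one_ne_zero, Nat.sub_self, Walk.getVert_zero, ← hqP]
        rfl
    · intro v w hadj
      by_cases hv : v ∈ (P w).support
      · -- then w ∉ support (P v), second disjunct
        right
        have hwr : w ≠ r := by
          rintro rfl
          have : P w = Walk.nil := (hPuniq w Walk.nil Walk.IsPath.nil).symm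
          rw [this] at hv
          simp at hv
          exact hadj.ne hv
        have hPv : (P w).dropUntil v hv = P v :=
          hPuniq v _ ((hPpath w).dropUntil hv)
        have hwns : w ∉ (P v).support := by
          rw [← hPv]
          intro hmem
          have hspec := Walk.take_spec (P w) hv
          have hnodup := (hPpath w).support_nodup
          rw [← hspec, Walk.support_append] at hnodup
          rw [List.nodup_append] at hnodup
          have hwtake : w ∈ ((P w).takeUntil v hv).support := Walk.start_mem_support _
          have hwtail : w ∈ ((P w).dropUntil v hv).support.tail := by
            have hd : ((P w).dropUntil v hv).support = v :: ((P w).dropUntil v hv).support.tail := by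
              rw [← Walk.support_eq_cons]
            rw [hd] at hmem
            rcases List.mem_cons.1 hmem with h | h
            · exact absurd h hadj.ne'
            · exact h
          exact hnodup.2.2 w hwtake w hwtail rfl
        have hcons : (Walk.cons (hadj.symm) (P v)).IsPath :=
          (Walk.cons_isPath_iff _ _).2 ⟨hPpath v, hwns⟩
        have := hPuniq w _ hcons
        refine ⟨hwr, ?_⟩
        show (P w).getVert 1 = v
        rw [← this, Walk.getVert_cons _ _ one_ne_zero, Nat.sub_self, Walk.getVert_zero]
      · left
        have hvr : v ≠ r := by
          rintro rfl
          exact hv (Walk.end_mem_support _)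
        have hcons : (Walk.cons hadj (P w)).IsPath :=
          (Walk.cons_isPath_iff _ _).2 ⟨hPpath w, hv⟩
        have := hPuniq v _ hcons
        refine ⟨hvr, ?_⟩
        show (P v).getVert 1 = w
        rw [← this, Walk.getVert_cons _ _ one_ne_zero, Nat.sub_self, Walk.getVert_zero]


/-- Fuel-based definition of the coloring. -/
def colAux {V : Type*} [DecidableEq V] (k : ℕ) (r : V) (parent : V → V) (idxf : V → ℕ) :
    ℕ → V → Fin (k + 1)
  | 0, _ => 0
  | d + 1, v => if v = r then 0 else
      colAux k r parent idxf d (parent v) + ⟨(idxf v % k + 1) % (k + 1), Nat.mod_lt _ (Nat.succ_pos k)⟩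

/-- A proper coloring of a rooted tree, injective on siblings. -/
lemma exists_coloring {V : Type*} [Fintype V] [DecidableEq V] (k : ℕ) (hk : 2 ≤ k)
    (T : SimpleGraph V) [DecidableRel T.Adj]
    (r : V) (parent : V → V) (depth : V → ℕ)
    (hdr : depth r = 0)
    (hpar : ∀ v, v ≠ r → T.Adj v (parent v) ∧ depth v = depth (parent v) + 1)
    (hdeg : ∀ v, T.degree v ≤ k + 1) (hdegr : T.degree r ≤ 1) :
    ∃ col : V → Fin (k + 1), col r = 0 ∧
      (∀ v, v ≠ r → col v ≠ col (parent v)) ∧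
      (∀ u v, u ≠ r → v ≠ r → parent u = parent v → col u = col v → u = v) := by
  classical
  set children : V → Finset V := fun p =>
    if p = r then T.neighborFinset p else T.neighborFinset p \ {parent p} with hch
  have hchcard : ∀ p, (children p).card ≤ k := by
    intro p
    by_cases hp : p = r
    · rw [hp]
      simp only [hch, if_pos rfl]
      calc (T.neighborFinset r).card = T.degree r := rfl
        _ ≤ 1 := hdegr
        _ ≤ k := by omega
    · simp only [hch, if_neg hp]
      have hmem : parent p ∈ T.neighborFinset p := by
        rw [mem_neighborFinset]; exact (hpar p hp).1
      have : (T.neighborFinset p \ {parent p}).card = T.degree p - 1 := by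
        rw [Finset.sdiff_singleton_eq_erase, Finset.card_erase_of_mem hmem]; rfl
      rw [this]
      have := hdeg p
      omega
  have hchmem : ∀ v, v ≠ r → v ∈ children (parent v) := by
    intro v hv
    have hadj : T.Adj (parent v) v := ((hpar v hv).1).symm
    by_cases hp : parent v = r
    · simp only [hch, if_pos hp, mem_neighborFinset]; exact hadj
    · simp only [hch, if_neg hp, Finset.mem_sdiff, mem_neighborFinset, Finset.mem_singleton]
      refine ⟨hadj, ?_⟩
      intro hvpp
      have h1 := (hpar v hv).2
      have h2 := (hpar (parent v) hp).2
      rw [← hvpp] at h2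
      omega
  set idxf : V → ℕ := fun v => List.idxOf v (children (parent v)).toList with hidxf
  have hidxlt : ∀ v, v ≠ r → idxf v < k := by
    intro v hv
    have hmem : v ∈ (children (parent v)).toList := by
      rw [Finset.mem_toList]; exact hchmem v hv
    have h1 : idxf v < (children (parent v)).toList.length := List.idxOf_lt_length_iff.2 hmem
    have h2 : (children (parent v)).toList.length = (children (parent v)).card :=
      Finset.length_toList _
    have := hchcard (parent v)
    omega
  have hidxinj : ∀ u v, u ≠ r → v ≠ r → parent u = parent v → idxf u = idxf v → u = v := by
    intro u v hu hv hp hidx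
    have hmu : u ∈ (children (parent u)).toList := by
      rw [Finset.mem_toList]; exact hchmem u hu
    have hmv : v ∈ (children (parent v)).toList := by
      rw [Finset.mem_toList]; exact hchmem v hv
    rw [hp] at hmu
    have hidx' : List.idxOf u (children (parent v)).toList =
        List.idxOf v (children (parent v)).toList := by
      have : idxf u = List.idxOf u (children (parent u)).toList := rfl
      rw [this, hp] at hidx
      exact hidx
    exact (List.idxOf_inj hmu (y := v)).1 hidx'
  set gval : V → Fin (k + 1) :=
    fun v => ⟨(idxf v % k + 1) % (k + 1), Nat.mod_lt _ (Nat.succ_pos k)⟩ with hgvaldef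
  set col : V → Fin (k + 1) := fun v => colAux k r parent idxf (depth v) v with hcoldef
  have hgval : ∀ v, v ≠ r → (gval v).val = idxf v + 1 := by
    intro v hv
    have h1 := hidxlt v hv
    show (idxf v % k + 1) % (k + 1) = idxf v + 1
    have e1 : idxf v % k = idxf v := Nat.mod_eq_of_lt h1
    rw [e1]
    exact Nat.mod_eq_of_lt (by omega)
  have hgne : ∀ v, v ≠ r → gval v ≠ 0 := by
    intro v hv h0
    have := hgval v hv
    rw [h0] at this
    simp at this
  have hcolstep : ∀ v, v ≠ r → col v = col (parent v) + gval v := by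
    intro v hv
    have hd := (hpar v hv).2
    show colAux k r parent idxf (depth v) v = _
    rw [hd]
    show (if v = r then 0 else
      colAux k r parent idxf (depth (parent v)) (parent v) + gval v) = _
    rw [if_neg hv]
  refine ⟨col, ?_, ?_, ?_⟩
  · show colAux k r parent idxf (depth r) r = 0
    rw [hdr]
    rfl
  · intro v hv h
    rw [hcolstep v hv] at h
    exact hgne v hv (by
      have := left_eq_add.1 h.symm
      exact this)
  · intro u v hu hv hp h
    rw [hcolstep u hu, hcolstep v hv, hp] at h
    have hg : gval u = gval v := add_left_cancel h
    have : idxf u = idxf v := by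
      have h1 := hgval u hu
      have h2 := hgval v hv
      rw [hg] at h1
      omega
    exact hidxinj u v hu hv hp this


/-- Fuel-based definition of the ancestor table: `AAux … d v i` is the deepest ancestor of `v`
of color `i` (when `d = depth v`). -/
def AAux {V : Type*} [DecidableEq V] (k : ℕ) (r : V) (parent : V → V) (col : V → Fin (k + 1)) :
    ℕ → V → Fin (k + 1) → Option V
  | 0, v => fun i => if i = 0 then some v else none
  | d + 1, v => if v = r then (fun i => if i = 0 then some v else none)
      else Function.update (AAux k r parent col d (parent v)) (col v) (some v)

section Alemmas

variable {V : Type*} [DecidableEq V] {k : ℕ} {r : V} {parent : V → V} {depth : V → ℕ}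
  {col : V → Fin (k + 1)} {A : V → Fin (k + 1) → Option V}

variable (hd0 : ∀ v, depth v = 0 → v = r)
  (hpdep : ∀ v, v ≠ r → depth v = depth (parent v) + 1)
  (hcol0 : col r = 0)
  (hAr : ∀ i, A r i = if i = 0 then some r else none)
  (hAv : ∀ v, v ≠ r → A v = Function.update (A (parent v)) (col v) (some v))

include hd0 hpdep hcol0 hAr hAv

omit hd0 hpdep in
lemma AL0r : ∀ i u, A r i = some u → u = r ∧ i = 0 := by
  intro i u h
  rw [hAr] at h
  by_cases hi : i = 0
  · rw [if_pos hi] at h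
    exact ⟨(Option.some_injective _ h).symm, hi⟩
  · rw [if_neg hi] at h
    exact absurd h (Option.some_ne_none u).symm

lemma AL0 : ∀ (n : ℕ) (v : V), depth v ≤ n → ∀ i u, A v i = some u →
    col u = i ∧ depth u ≤ depth v ∧ (depth v ≤ depth u → u = v) := by
  intro n
  induction n with
  | zero =>
    intro v hv i u h
    have hvr : v = r := hd0 v (Nat.le_zero.1 hv)
    subst hvr
    obtain ⟨rfl, rfl⟩ := AL0r hcol0 hAr hAv i u h
    exact ⟨hcol0, le_refl _, fun _ => rfl⟩
  | succ n ih =>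
    intro v hv i u h
    by_cases hvr : v = r
    · subst hvr
      obtain ⟨rfl, rfl⟩ := AL0r hcol0 hAr hAv i u h
      exact ⟨hcol0, le_refl _, fun _ => rfl⟩
    · rw [hAv v hvr] at h
      by_cases hi : i = col v
      · subst hi
        rw [Function.update_self] at h
        have : u = v := Option.some_injective _ h.symm
        subst this
        exact ⟨rfl, le_refl _, fun _ => rfl⟩
      · rw [Function.update_of_ne hi] at h
        have hdp := hpdep v hvr
        have hple : depth (parent v) ≤ n := by omega
        obtain ⟨h1, h2, _⟩ := ih (parent v) hple i u h
        exact ⟨h1, by omega, fun hle => by omega⟩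

lemma ALnz : ∀ (n : ℕ) (v : V), depth v ≤ n → A v 0 ≠ none := by
  intro n
  induction n with
  | zero =>
    intro v hv
    have hvr : v = r := hd0 v (Nat.le_zero.1 hv)
    subst hvr
    rw [hAr, if_pos rfl]
    exact (Option.some_ne_none _)
  | succ n ih =>
    intro v hv
    by_cases hvr : v = r
    · subst hvr
      rw [hAr, if_pos rfl]
      exact (Option.some_ne_none _)
    · rw [hAv v hvr]
      by_cases hc : (0 : Fin (k+1)) = col v
      · rw [← hc, Function.update_self]
        exact (Option.some_ne_none _)
      · rw [Function.update_of_ne (Ne.symm (fun h => hc h.symm))]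
        have hdp := hpdep v hvr
        exact ih (parent v) (by omega)

lemma AP1 : ∀ v : V, A v (col v) = some v := by
  intro v
  by_cases hvr : v = r
  · subst hvr
    rw [hAr, hcol0, if_pos rfl]
  · rw [hAv v hvr, Function.update_self]

lemma AINJ : ∀ v w : V, A v = A w → v = w := by
  intro v w h
  have h1 : A w (col v) = some v := by rw [← h]; exact AP1 hd0 hpdep hcol0 hAr hAv v
  have h2 : A v (col w) = some w := by rw [h]; exact AP1 hd0 hpdep hcol0 hAr hAv w
  obtain ⟨_, hle1, heq1⟩ := AL0 hd0 hpdep hcol0 hAr hAv (depth w) w (le_refl _) _ _ h1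
  obtain ⟨_, hle2, _⟩ := AL0 hd0 hpdep hcol0 hAr hAv (depth v) v (le_refl _) _ _ h2
  exact heq1 (by omega)

lemma AL1 : ∀ (n : ℕ) (z : V), depth z ≤ n → ∀ u w, A z (col u) = some u →
    A z (col w) = some w → depth u ≤ depth w → A w (col u) = some u := by
  intro n
  induction n with
  | zero =>
    intro z hz u w hu hw _
    have hzr : z = r := hd0 z (Nat.le_zero.1 hz)
    subst hzr
    obtain ⟨rfl, -⟩ := AL0r hcol0 hAr hAv _ _ hu
    obtain ⟨rfl, -⟩ := AL0r hcol0 hAr hAv _ _ hw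
    exact hu
  | succ n ih =>
    intro z hz u w hu hw hduw
    by_cases hzr : z = r
    · subst hzr
      obtain ⟨rfl, -⟩ := AL0r hcol0 hAr hAv _ _ hu
      obtain ⟨rfl, -⟩ := AL0r hcol0 hAr hAv _ _ hw
      exact hu
    · by_cases hwz : w = z
      · subst hwz; exact hu
      · have hdz := hpdep z hzr
        have hcwz : col w ≠ col z := by
          intro hc
          rw [hAv z hzr, hc, Function.update_self] at hw
          exact hwz (Option.some_injective _ hw.symm)
        have hw' : A (parent z) (col w) = some w := by
          rw [hAv z hzr, Function.update_of_ne hcwz] at hw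
          exact hw
        have huz : u ≠ z := by
          intro hu'
          obtain ⟨-, hle, -⟩ := AL0 hd0 hpdep hcol0 hAr hAv (depth (parent z))
            (parent z) (le_refl _) _ _ hw'
          rw [hu'] at hduw
          omega
        have hcuz : col u ≠ col z := by
          intro hc
          rw [hAv z hzr, hc, Function.update_self] at hu
          exact huz (Option.some_injective _ hu.symm)
        have hu' : A (parent z) (col u) = some u := by
          rw [hAv z hzr, Function.update_of_ne hcuz] at hu
          exact hu
        exact ih (parent z) (by omega) u w hu' hw' hduw

lemma AL2 : ∀ (n : ℕ) (z : V), depth z ≤ n → ∀ u j, A z j = none →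
    A z (col u) = some u → A u j = none := by
  intro n
  induction n with
  | zero =>
    intro z hz u j hn hu
    have hzr : z = r := hd0 z (Nat.le_zero.1 hz)
    subst hzr
    obtain ⟨rfl, -⟩ := AL0r hcol0 hAr hAv _ _ hu
    exact hn
  | succ n ih =>
    intro z hz u j hn hu
    by_cases hzr : z = r
    · subst hzr
      obtain ⟨rfl, -⟩ := AL0r hcol0 hAr hAv _ _ hu
      exact hn
    · by_cases huz : u = z
      · subst huz; exact hn
      · have hdz := hpdep z hzr
        have hcuz : col u ≠ col z := by
          intro hc
          rw [hAv z hzr, hc, Function.update_self] at hu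
          exact huz (Option.some_injective _ hu.symm)
        have hu' : A (parent z) (col u) = some u := by
          rw [hAv z hzr, Function.update_of_ne hcuz] at hu
          exact hu
        have hjz : j ≠ col z := by
          intro hc
          rw [hAv z hzr, hc, Function.update_self] at hn
          exact (Option.some_ne_none z) hn
        have hn' : A (parent z) j = none := by
          rw [hAv z hzr, Function.update_of_ne hjz] at hn
          exact hn
        exact ih (parent z) (by omega) u j hn' hu'

variable (hdr : depth r = 0)
  (hproper : ∀ v, v ≠ r → col v ≠ col (parent v))
  (hsib : ∀ u v, u ≠ r → v ≠ r → parent u = parent v → col u = col v → u = v)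

include hdr hproper hsib

lemma AONE : ∀ (N : ℕ) (v w : V) (j : Fin (k + 1)), depth v + depth w ≤ N →
    depth w ≤ depth v → v ≠ w → (∀ i, i ≠ j → A v i = A w i) →
    w = parent v ∧ v ≠ r ∧ j = col v := by
  intro N
  induction N with
  | zero =>
    intro v w j hN hwv hvw _
    have hv0 : depth v = 0 := by omega
    have hw0 : depth w = 0 := by omega
    exact absurd ((hd0 v hv0).trans (hd0 w hw0).symm) hvw
  | succ N ih =>
    intro v w j hN hwv hvw hiff
    by_cases hvr : v = r
    · subst hvr
      rw [hdr] at hwv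
      exact absurd (hd0 w (Nat.le_zero.1 hwv)).symm hvw
    · have hdp := hpdep v hvr
      have hj : j = col v := by
        by_contra hj
        have h1 : A w (col v) = some v := by
          rw [← hiff (col v) (fun h => hj h.symm)]
          exact AP1 hd0 hpdep hcol0 hAr hAv v
        obtain ⟨-, hle, heq⟩ := AL0 hd0 hpdep hcol0 hAr hAv (depth w) w (le_refl _) _ _ h1
        exact hvw (heq (by omega) : v = w)
      subst hj
      have hAiff : ∀ i, i ≠ col v → A (parent v) i = A w i := by
        intro i hi
        have h1 := hiff i hi
        rw [hAv v hvr, Function.update_of_ne hi] at h1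
        exact h1
      by_cases hwp : w = parent v
      · exact ⟨hwp, hvr, rfl⟩
      · by_cases heq : A (parent v) (col v) = A w (col v)
        · have hall : A (parent v) = A w := by
            funext i
            by_cases h : i = col v
            · rw [h]; exact heq
            · exact hAiff i h
          exact absurd (AINJ hd0 hpdep hcol0 hAr hAv _ _ hall).symm hwp
        · rcases le_total (depth w) (depth (parent v)) with hle | hle
          · obtain ⟨-, -, hcp⟩ := ih (parent v) w (col v) (by omega) hle
              (fun h => hwp h.symm) hAiff
            exact absurd hcp (hproper v hvr)
          · obtain ⟨hpw, hwr, hcw⟩ := ih w (parent v) (col v) (by omega) hle hwp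
              (fun i hi => (hAiff i hi).symm)
            exact absurd (hsib v w hvr hwr hpw hcw) hvw

end Alemmas

end Aux

section Core

variable {V : Type*}

/-- Rendering of the ancestor table row as an element of `V ⊕ Fin (k+1)`. -/
def fF {k : ℕ} (A : V → Fin (k + 1) → Option V) (v : V) (i : Fin (k + 1)) :
    V ⊕ Fin (k + 1) := (A v i).elim (Sum.inr i) Sum.inl

/-- The coordinate (color) of an element of `V ⊕ Fin (k+1)`. -/
def coordF {k : ℕ} (col : V → Fin (k + 1)) : V ⊕ Fin (k + 1) → Fin (k + 1) :=
  Sum.elim col id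

/-- `a` occurs in the table row of `z`. -/
def MemF {k : ℕ} (col : V → Fin (k + 1)) (A : V → Fin (k + 1) → Option V)
    (a : V ⊕ Fin (k + 1)) (z : V) : Prop :=
  Sum.elim (fun u => A z (col u) = some u) (fun j => A z j = none) a

variable {k : ℕ} {col : V → Fin (k + 1)} {A : V → Fin (k + 1) → Option V}

lemma MemF_inl {u z : V} : MemF col A (Sum.inl u) z ↔ A z (col u) = some u := Iff.rfl

lemma MemF_inr {j : Fin (k + 1)} {z : V} : MemF col A (Sum.inr j) z ↔ A z j = none := Iff.rfl

lemma coordF_inl {u : V} : coordF col (Sum.inl u) = col u := rfl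

lemma coordF_inr {j : Fin (k + 1)} : coordF col (Sum.inr j : V ⊕ Fin (k + 1)) = j := rfl

lemma fF_some {v u : V} {i : Fin (k + 1)} (h : A v i = some u) : fF A v i = Sum.inl u := by
  unfold fF; rw [h]; rfl

lemma fF_none {v : V} {i : Fin (k + 1)} (h : A v i = none) : fF A v i = Sum.inr i := by
  unfold fF; rw [h]; rfl

lemma core [Fintype V] [DecidableEq V] (hk : 2 ≤ k)
    (T : SimpleGraph V)
    (r : V) (parent : V → V) (depth : V → ℕ) (col : V → Fin (k + 1))
    (A : V → Fin (k + 1) → Option V)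
    (hd0 : ∀ v, depth v = 0 → v = r)
    (hdr : depth r = 0)
    (hpdep : ∀ v, v ≠ r → depth v = depth (parent v) + 1)
    (hpadj : ∀ v, v ≠ r → T.Adj v (parent v))
    (hadjchar : ∀ v w, T.Adj v w → (v ≠ r ∧ parent v = w) ∨ (w ≠ r ∧ parent w = v))
    (hcol0 : col r = 0)
    (hproper : ∀ v, v ≠ r → col v ≠ col (parent v))
    (hsib : ∀ u v, u ≠ r → v ≠ r → parent u = parent v → col u = col v → u = v)
    (hAr : ∀ i, A r i = if i = 0 then some r else none)
    (hAv : ∀ v, v ≠ r → A v = Function.update (A (parent v)) (col v) (some v)) :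
    ∃ G : SimpleGraph (V ⊕ Fin (k + 1)), Nonempty (TS G (k + 1) ≃g T) := by
  classical
  have AP1' : ∀ v, A v (col v) = some v := AP1 hd0 hpdep hcol0 hAr hAv
  have AL0' : ∀ v i u, A v i = some u →
      col u = i ∧ depth u ≤ depth v ∧ (depth v ≤ depth u → u = v) :=
    fun v => AL0 hd0 hpdep hcol0 hAr hAv (depth v) v (le_refl _)
  have ALnz' : ∀ v, A v 0 ≠ none :=
    fun v => ALnz hd0 hpdep hcol0 hAr hAv (depth v) v (le_refl _)
  have AL1' : ∀ z u w, A z (col u) = some u → A z (col w) = some w → depth u ≤ depth w →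
      A w (col u) = some u := fun z => AL1 hd0 hpdep hcol0 hAr hAv (depth z) z (le_refl _)
  have AL2' : ∀ z u j, A z j = none → A z (col u) = some u → A u j = none :=
    fun z => AL2 hd0 hpdep hcol0 hAr hAv (depth z) z (le_refl _)
  have AINJ' : ∀ v w, A v = A w → v = w := AINJ hd0 hpdep hcol0 hAr hAv
  have AONE' : ∀ v w j, depth w ≤ depth v → v ≠ w → (∀ i, i ≠ j → A v i = A w i) →
      w = parent v ∧ v ≠ r ∧ j = col v :=
    fun v w j => AONE hd0 hpdep hcol0 hAr hAv hdr hproper hsib (depth v + depth w) v w j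
      (le_refl _)
  have h_coord_f : ∀ v i, coordF col (fF A v i) = i := by
    intro v i
    rcases h : A v i with _ | u
    · rw [fF_none h, coordF_inr]
    · rw [fF_some h, coordF_inl]
      exact (AL0' v i u h).1
  have h_mem_f : ∀ v i, MemF col A (fF A v i) v := by
    intro v i
    rcases h : A v i with _ | u
    · rw [fF_none h, MemF_inr]; exact h
    · rw [fF_some h, MemF_inl, (AL0' v i u h).1]; exact h
  have h_f_inj : ∀ v i i', fF A v i = fF A v i' → i = i' := by
    intro v i i' h
    have := congrArg (coordF col) h
    rwa [h_coord_f, h_coord_f] at this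
  have h_f_to_A : ∀ v w i, fF A v i = fF A w i → A v i = A w i := by
    intro v w i h
    rcases h1 : A v i with _ | u <;> rcases h2 : A w i with _ | u'
    · rfl
    · rw [fF_none h1, fF_some h2] at h; exact absurd h (by simp)
    · rw [fF_some h1, fF_none h2] at h; exact absurd h (by simp)
    · rw [fF_some h1, fF_some h2] at h
      simp only [Sum.inl.injEq] at h
      rw [h]
  set G : SimpleGraph (V ⊕ Fin (k + 1)) :=
    SimpleGraph.fromRel (fun a b => ¬ ∃ z, MemF col A a z ∧ MemF col A b z) with hG
  have hGadj : ∀ a b, G.Adj a b ↔ a ≠ b ∧ ¬ ∃ z, MemF col A a z ∧ MemF col A b z := by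
    intro a b
    rw [hG]
    rw [SimpleGraph.fromRel_adj]
    constructor
    · rintro ⟨hne, h | h⟩
      · exact ⟨hne, h⟩
      · exact ⟨hne, fun hc => h ⟨hc.choose, hc.choose_spec.2, hc.choose_spec.1⟩⟩
    · rintro ⟨hne, h⟩; exact ⟨hne, Or.inl h⟩
  set S : V → Finset (V ⊕ Fin (k + 1)) := fun v => Finset.image (fF A v) Finset.univ with hS
  have h_mem_S : ∀ v a, a ∈ S v ↔ fF A v (coordF col a) = a := by
    intro v a
    simp only [hS, Finset.mem_image]
    constructor
    · rintro ⟨i, -, hi⟩; rw [← hi, h_coord_f]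
    · intro h; exact ⟨_, Finset.mem_univ _, h⟩
  have h_card : ∀ v, (S v).card = k + 1 := by
    intro v
    rw [hS]
    rw [Finset.card_image_of_injective _ (fun i i' h => h_f_inj v i i' h), Finset.card_univ,
      Fintype.card_fin]
  have h_TSV : ∀ v, TSVert G (k + 1) (S v) := by
    intro v
    refine ⟨h_card v, ?_⟩
    intro a ha b hb hadj
    refine ((hGadj a b).1 hadj).2 ⟨v, ?_, ?_⟩
    · rw [← (h_mem_S v a).1 ha]; exact h_mem_f v _
    · rw [← (h_mem_S v b).1 hb]; exact h_mem_f v _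
  have h_inl_mem : ∀ w u, Sum.inl u ∈ S w → A w (col u) = some u := by
    intro w u h
    have h1 := (h_mem_S w _).1 h
    rw [coordF_inl] at h1
    rcases h2 : A w (col u) with _ | u'
    · rw [fF_none h2] at h1; exact absurd h1 (by simp)
    · rw [fF_some h2] at h1
      simp only [Sum.inl.injEq] at h1
      rw [h1]
  have h_inr_mem : ∀ w (j : Fin (k + 1)), Sum.inr j ∈ S w → A w j = none := by
    intro w j h
    have h1 := (h_mem_S w _).1 h
    rw [coordF_inr] at h1
    rcases h2 : A w j with _ | u'
    · rfl
    · rw [fF_some h2] at h1; exact absurd h1 (by simp)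
  have h_inl_S : ∀ v, Sum.inl v ∈ S v := by
    intro v
    exact (h_mem_S v _).2 (by rw [coordF_inl]; exact fF_some (AP1' v))
  have h_S_inj : ∀ v w, S v = S w → v = w := by
    intro v w h
    have e1 := h_inl_mem w v (h ▸ h_inl_S v)
    have e2 := h_inl_mem v w (h ▸ h_inl_S w)
    obtain ⟨-, hle1, -⟩ := AL0' w _ _ e1
    obtain ⟨-, hle2, heq2⟩ := AL0' v _ _ e2
    exact (heq2 (by omega)).symm
  -- every token configuration is some S v
  have h_surj : ∀ I : Finset (V ⊕ Fin (k + 1)), TSVert G (k + 1) I → ∃ v, S v = I := by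
    intro I hI
    obtain ⟨hcard, hind⟩ := hI
    have hcompat : ∀ a ∈ I, ∀ b ∈ I, a ≠ b → ∃ z, MemF col A a z ∧ MemF col A b z := by
      intro a ha b hb hab
      by_contra hC
      exact hind a ha b hb ((hGadj a b).2 ⟨hab, hC⟩)
    have hcoordinj : Set.InjOn (coordF col) ↑I := by
      intro a ha b hb h
      by_contra hab
      obtain ⟨z, hz1, hz2⟩ := hcompat a (Finset.mem_coe.1 ha) b (Finset.mem_coe.1 hb) hab
      rcases a with u | j <;> rcases b with u' | j'
      · rw [coordF_inl, coordF_inl] at h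
        rw [MemF_inl] at hz1 hz2
        rw [h] at hz1
        rw [hz1] at hz2
        have huu : u = u' := by injection hz2
        exact hab (by rw [huu])
      · rw [coordF_inl, coordF_inr] at h
        rw [MemF_inl] at hz1
        rw [MemF_inr] at hz2
        rw [h, hz2] at hz1
        exact absurd hz1 (by simp)
      · rw [coordF_inr, coordF_inl] at h
        rw [MemF_inr] at hz1
        rw [MemF_inl] at hz2
        rw [← h, hz1] at hz2
        exact absurd hz2 (by simp)
      · rw [coordF_inr, coordF_inr] at h
        exact hab (by rw [h])
    have himg : Finset.image (coordF col) I = Finset.univ := by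
      apply Finset.eq_univ_of_card
      rw [Finset.card_image_of_injOn hcoordinj, hcard, Fintype.card_fin]
    have hcoordsurj : ∀ i : Fin (k + 1), ∃ a ∈ I, coordF col a = i := by
      intro i
      have : i ∈ Finset.image (coordF col) I := by rw [himg]; exact Finset.mem_univ i
      exact Finset.mem_image.1 this
    have hinl : ∃ u, Sum.inl u ∈ I := by
      obtain ⟨a, ha, ha0⟩ := hcoordsurj 0
      rcases a with u | j
      · exact ⟨u, ha⟩
      · exfalso
        rw [coordF_inr] at ha0
        obtain ⟨b, hb, hb1⟩ := hcoordsurj ⟨1, by omega⟩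
        have hab : (Sum.inr j : V ⊕ Fin (k + 1)) ≠ b := by
          intro h
          rw [← h, coordF_inr] at hb1
          rw [ha0] at hb1
          have : (0 : Fin (k + 1)).val = 1 := by rw [hb1]
          simp at this
        obtain ⟨z, hz1, hz2⟩ := hcompat _ ha b hb hab
        rw [MemF_inr, ha0] at hz1
        exact ALnz' z hz1
    obtain ⟨u₀, hu₀⟩ := hinl
    have hJne : (Finset.univ.filter (fun u => Sum.inl u ∈ I)).Nonempty :=
      ⟨u₀, Finset.mem_filter.2 ⟨Finset.mem_univ _, hu₀⟩⟩
    obtain ⟨v, hvJ, hvmax⟩ := Finset.exists_max_image _ depth hJne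
    have hvI : Sum.inl v ∈ I := (Finset.mem_filter.1 hvJ).2
    refine ⟨v, ?_⟩
    refine (Finset.eq_of_subset_of_card_le ?_ ?_).symm
    · intro a ha
      rcases a with u | j
      · by_cases huv : u = v
        · rw [huv]; exact h_inl_S v
        · have hab : (Sum.inl u : V ⊕ Fin (k + 1)) ≠ Sum.inl v := by simp [huv]
          obtain ⟨z, hz1, hz2⟩ := hcompat _ ha _ hvI hab
          rw [MemF_inl] at hz1 hz2
          have hdep : depth u ≤ depth v :=
            hvmax u (Finset.mem_filter.2 ⟨Finset.mem_univ _, ha⟩)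
          have := AL1' z u v hz1 hz2 hdep
          exact (h_mem_S v _).2 (by rw [coordF_inl]; exact fF_some this)
      · have hab : (Sum.inr j : V ⊕ Fin (k + 1)) ≠ Sum.inl v := by simp
        obtain ⟨z, hz1, hz2⟩ := hcompat _ ha _ hvI hab
        rw [MemF_inr] at hz1
        rw [MemF_inl] at hz2
        have := AL2' z v j hz1 hz2
        exact (h_mem_S v _).2 (by rw [coordF_inr]; exact fF_none this)
    · rw [hcard, h_card]
  -- adjacency, easy direction
  have key1 : ∀ v, v ≠ r →
      (TS G (k + 1)).Adj ⟨S v, h_TSV v⟩ ⟨S (parent v), h_TSV (parent v)⟩ := by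
    intro v hv
    have hup := hAv v hv
    have hdp := hpdep v hv
    have hAvp : ∀ i, i ≠ col v → A v i = A (parent v) i := by
      intro i hi
      rw [hup, Function.update_of_ne hi]
    have hfvp : ∀ i, i ≠ col v → fF A v i = fF A (parent v) i := by
      intro i hi
      unfold fF
      rw [hAvp i hi]
    have hfv : fF A v (col v) = Sum.inl v := fF_some (AP1' v)
    have hApv : A (parent v) (col v) ≠ some v := by
      intro h
      obtain ⟨-, hle, -⟩ := AL0' (parent v) _ _ h
      omega
    have hnotinSp : Sum.inl v ∉ S (parent v) := fun h => hApv (h_inl_mem (parent v) v h)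
    have hdiff1 : (↑(S v) : Set (V ⊕ Fin (k + 1))) \ ↑(S (parent v)) = {Sum.inl v} := by
      ext a
      simp only [Set.mem_diff, Finset.mem_coe, Set.mem_singleton_iff]
      constructor
      · rintro ⟨haS, haN⟩
        have h1 := (h_mem_S v a).1 haS
        by_cases hc : coordF col a = col v
        · rw [hc] at h1; rw [← h1, hfv]
        · exfalso
          apply haN
          refine (h_mem_S (parent v) a).2 ?_
          rw [← hfvp _ hc]
          exact h1
      · rintro rfl
        exact ⟨h_inl_S v, hnotinSp⟩
    have hbSp : fF A (parent v) (col v) ∈ S (parent v) :=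
      (h_mem_S _ _).2 (by rw [h_coord_f])
    have hbnotSv : fF A (parent v) (col v) ∉ S v := by
      intro h
      have h1 := (h_mem_S v _).1 h
      rw [h_coord_f] at h1
      rw [hfv] at h1
      exact hnotinSp (h1 ▸ hbSp)
    have hdiff2 : (↑(S (parent v)) : Set (V ⊕ Fin (k + 1))) \ ↑(S v) =
        {fF A (parent v) (col v)} := by
      ext a
      simp only [Set.mem_diff, Finset.mem_coe, Set.mem_singleton_iff]
      constructor
      · rintro ⟨haS, haN⟩
        have h1 := (h_mem_S (parent v) a).1 haS
        by_cases hc : coordF col a = col v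
        · rw [hc] at h1; rw [← h1]
        · exfalso
          apply haN
          refine (h_mem_S v a).2 ?_
          rw [hfvp _ hc]
          exact h1
      · rintro rfl
        exact ⟨hbSp, hbnotSv⟩
    have hGb : G.Adj (Sum.inl v) (fF A (parent v) (col v)) := by
      refine (hGadj _ _).2 ⟨?_, ?_⟩
      · intro h
        exact hnotinSp (h ▸ hbSp)
      · rintro ⟨z, hz1, hz2⟩
        rw [MemF_inl] at hz1
        rcases hb : A (parent v) (col v) with _ | u
        · rw [fF_none hb, MemF_inr] at hz2
          rw [hz2] at hz1
          exact absurd hz1 (by simp)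
        · rw [fF_some hb, MemF_inl] at hz2
          have hcu : col u = col v := (AL0' (parent v) _ _ hb).1
          rw [hcu] at hz2
          rw [hz1] at hz2
          have : u = v := by injection hz2.symm
          rw [this] at hb
          exact hApv hb
    have hne : (⟨S v, h_TSV v⟩ : {I : Finset (V ⊕ Fin (k + 1)) // TSVert G (k + 1) I}) ≠
        ⟨S (parent v), h_TSV (parent v)⟩ := by
      intro h
      have h1 := h_S_inj v (parent v) (congrArg Subtype.val h)
      have h2 := hpdep v hv
      rw [← h1] at h2
      omega
    show (SimpleGraph.fromRel _).Adj _ _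
    rw [SimpleGraph.fromRel_adj]
    exact ⟨hne, Or.inl ⟨Sum.inl v, fF A (parent v) (col v), hdiff1, hdiff2, hGb⟩⟩
  -- adjacency, hard direction
  have key2 : ∀ v w, v ≠ w →
      (∃ a, (↑(S v) : Set (V ⊕ Fin (k + 1))) \ ↑(S w) = {a}) → T.Adj v w := by
    intro v w hvw ⟨a, ha⟩
    have hdiffs : ∀ i, fF A v i ≠ fF A w i → fF A v i = a := by
      intro i hi
      have h1 : fF A v i ∈ S v := (h_mem_S v _).2 (by rw [h_coord_f])
      have h2 : fF A v i ∉ S w := by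
        intro hmem
        have := (h_mem_S w _).1 hmem
        rw [h_coord_f] at this
        exact hi this.symm
      have : fF A v i ∈ (↑(S v) : Set (V ⊕ Fin (k + 1))) \ ↑(S w) := ⟨h1, h2⟩
      rw [ha] at this
      exact this
    have hj : ∃ j, fF A v j ≠ fF A w j := by
      by_contra hall
      push_neg at hall
      apply hvw
      apply AINJ'
      funext i
      exact h_f_to_A v w i (hall i)
    obtain ⟨j, hj⟩ := hj
    have hother : ∀ i, i ≠ j → A v i = A w i := by
      intro i hi
      by_contra hne'
      have hfne : fF A v i ≠ fF A w i := fun h => hne' (h_f_to_A v w i h)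
      have e1 := hdiffs i hfne
      have e2 := hdiffs j hj
      exact hi (h_f_inj v i j (e1.trans e2.symm))
    rcases le_total (depth w) (depth v) with hle | hle
    · obtain ⟨hwp, hvr, -⟩ := AONE' v w j hle hvw hother
      rw [hwp]
      exact hpadj v hvr
    · obtain ⟨hvp, hwr, -⟩ := AONE' w v j hle (Ne.symm hvw) (fun i hi => (hother i hi).symm)
      rw [hvp]
      exact (hpadj w hwr).symm
  -- assemble the isomorphism
  have hbij : Function.Bijective
      (fun v => (⟨S v, h_TSV v⟩ : {I : Finset (V ⊕ Fin (k + 1)) // TSVert G (k + 1) I})) := by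
    constructor
    · intro v w h
      exact h_S_inj v w (congrArg Subtype.val h)
    · intro I
      obtain ⟨v, hv⟩ := h_surj I.1 I.2
      exact ⟨v, Subtype.ext hv⟩
  set φ := Equiv.ofBijective _ hbij with hφ
  refine ⟨G, ⟨⟨φ.symm, ?_⟩⟩⟩
  intro a b
  obtain ⟨v, rfl⟩ := φ.surjective a
  obtain ⟨w, rfl⟩ := φ.surjective b
  rw [Equiv.symm_apply_apply, Equiv.symm_apply_apply]
  show T.Adj v w ↔ (TS G (k + 1)).Adj ⟨S v, h_TSV v⟩ ⟨S w, h_TSV w⟩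
  constructor
  · intro hT
    rcases hadjchar v w hT with ⟨hvr, hpv⟩ | ⟨hwr, hpw⟩
    · have := key1 v hvr
      rw [hpv] at this
      exact this
    · have := (key1 w hwr).symm
      rw [hpw] at this
      exact this
  · intro hTS
    have hvw : v ≠ w := by
      intro h
      rw [h] at hTS
      exact (TS G (k + 1)).irrefl hTS
    have hTS' : (SimpleGraph.fromRel _).Adj
        (⟨S v, h_TSV v⟩ : {I : Finset (V ⊕ Fin (k + 1)) // TSVert G (k + 1) I})
        ⟨S w, h_TSV w⟩ := hTS
    rw [SimpleGraph.fromRel_adj] at hTS'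
    rcases hTS'.2 with ⟨u, u', hd1, hd2, hadj⟩ | ⟨u, u', hd1, hd2, hadj⟩
    · exact key2 v w hvw ⟨u, hd1⟩
    · exact (key2 w v (Ne.symm hvw) ⟨u, hd1⟩).symm

end Core


section Transport

/-- Transport of token sliding graphs along an isomorphism of the base graphs. -/
lemma TS_transport {α β : Type*} (e : α ≃ β)
    (G : SimpleGraph α) (H : SimpleGraph β)
    (h : ∀ u v, H.Adj (e u) (e v) ↔ G.Adj u v) (n : ℕ) :
    Nonempty (TS H n ≃g TS G n) := by
  classical
  have hvert : ∀ I : Finset β, TSVert H n I ↔ TSVert G n (I.map e.symm.toEmbedding) := by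
    intro I
    constructor
    · rintro ⟨hc, hi⟩
      refine ⟨by rw [Finset.card_map, hc], ?_⟩
      intro u hu v hv hadj
      rw [Finset.mem_map] at hu hv
      obtain ⟨u0, hu0, rfl⟩ := hu
      obtain ⟨v0, hv0, rfl⟩ := hv
      refine hi u0 hu0 v0 hv0 ?_
      have h2 := h (e.symm u0) (e.symm v0)
      rw [e.apply_symm_apply, e.apply_symm_apply] at h2
      exact h2.2 hadj
    · rintro ⟨hc, hi⟩
      refine ⟨by rw [Finset.card_map] at hc; exact hc, ?_⟩
      intro u hu v hv hadj
      have hu' : e.symm u ∈ I.map e.symm.toEmbedding :=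
        Finset.mem_map_of_mem _ hu
      have hv' : e.symm v ∈ I.map e.symm.toEmbedding :=
        Finset.mem_map_of_mem _ hv
      refine hi _ hu' _ hv' ?_
      have h2 := h (e.symm u) (e.symm v)
      rw [e.apply_symm_apply, e.apply_symm_apply] at h2
      exact h2.1 hadj
  have hdiff : ∀ (I J : Finset β), (↑(I.map e.symm.toEmbedding) : Set α) \
      ↑(J.map e.symm.toEmbedding) = e.symm '' ((↑I : Set β) \ ↑J) := by
    intro I J
    rw [Finset.coe_map, Finset.coe_map, Set.image_diff e.symm.injective]
    rfl
  have hrel1 : ∀ (I J : Finset β),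
      (∃ u v, (↑I : Set β) \ ↑J = {u} ∧ (↑J : Set β) \ ↑I = {v} ∧ H.Adj u v) →
      (∃ u v, (↑(I.map e.symm.toEmbedding) : Set α) \ ↑(J.map e.symm.toEmbedding) = {u} ∧
        (↑(J.map e.symm.toEmbedding) : Set α) \ ↑(I.map e.symm.toEmbedding) = {v} ∧
        G.Adj u v) := by
    rintro I J ⟨u, v, h1, h2, hH⟩
    refine ⟨e.symm u, e.symm v, ?_, ?_, ?_⟩
    · rw [hdiff, h1, Set.image_singleton]
    · rw [hdiff, h2, Set.image_singleton]
    · have h2' := h (e.symm u) (e.symm v)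
      rw [e.apply_symm_apply, e.apply_symm_apply] at h2'
      exact h2'.1 hH
  have hrel2 : ∀ (I J : Finset β),
      (∃ u v, (↑(I.map e.symm.toEmbedding) : Set α) \ ↑(J.map e.symm.toEmbedding) = {u} ∧
        (↑(J.map e.symm.toEmbedding) : Set α) \ ↑(I.map e.symm.toEmbedding) = {v} ∧
        G.Adj u v) →
      (∃ u v, (↑I : Set β) \ ↑J = {u} ∧ (↑J : Set β) \ ↑I = {v} ∧ H.Adj u v) := by
    rintro I J ⟨u, v, h1, h2, hG⟩
    rw [hdiff] at h1 h2
    refine ⟨e u, e v, ?_, ?_, (h u v).2 hG⟩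
    · have := congrArg (Set.image e) h1
      rw [Equiv.image_symm_image, Set.image_singleton] at this
      exact this
    · have := congrArg (Set.image e) h2
      rw [Equiv.image_symm_image, Set.image_singleton] at this
      exact this
  refine ⟨⟨Equiv.subtypeEquiv (Equiv.finsetCongr e.symm) (fun I => ?_), ?_⟩⟩
  · rw [Equiv.finsetCongr_apply]
    exact hvert I
  · intro I J
    show (SimpleGraph.fromRel _).Adj _ _ ↔ (SimpleGraph.fromRel _).Adj _ _
    rw [SimpleGraph.fromRel_adj, SimpleGraph.fromRel_adj]
    constructor
    · rintro ⟨hne, h1 | h1⟩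
      · exact ⟨fun hIJ => hne (by rw [hIJ]), Or.inl (hrel2 I.1 J.1 h1)⟩
      · exact ⟨fun hIJ => hne (by rw [hIJ]), Or.inr (hrel2 J.1 I.1 h1)⟩
    · rintro ⟨hne, h1 | h1⟩
      · refine ⟨fun hEq => hne ?_, Or.inl (hrel1 I.1 J.1 h1)⟩
        exact (Equiv.subtypeEquiv (Equiv.finsetCongr e.symm) _).injective hEq
      · refine ⟨fun hEq => hne ?_, Or.inr (hrel1 J.1 I.1 h1)⟩
        exact (Equiv.subtypeEquiv (Equiv.finsetCongr e.symm) _).injective hEq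

end Transport


theorem stmt13 {V : Type*} [Fintype V] (k : ℕ) (hk : 2 ≤ k)
    (T : SimpleGraph V) [DecidableRel T.Adj] (hT : T.IsTree)
    (hdeg : ∀ v, T.degree v ≤ k + 1) :
    ∃ (m : ℕ) (G : SimpleGraph (Fin m)), Nonempty (TS G (k + 1) ≃g T) := by
  classical
  obtain ⟨r, parent, depth, hdegr, hdr, hd0, hpar, hadjchar⟩ := exists_rooted T hT
  obtain ⟨col, hcol0, hproper, hsib⟩ :=
    exists_coloring k hk T r parent depth hdr hpar hdeg hdegr
  have hpadj : ∀ v, v ≠ r → T.Adj v (parent v) := fun v hv => (hpar v hv).1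
  have hpdep : ∀ v, v ≠ r → depth v = depth (parent v) + 1 := fun v hv => (hpar v hv).2
  have hAr : ∀ i, (fun v => AAux k r parent col (depth v) v) r i =
      if i = 0 then some r else none := by
    intro i
    show AAux k r parent col (depth r) r i = _
    rw [hdr]
    rfl
  have hAv : ∀ v, v ≠ r → (fun v => AAux k r parent col (depth v) v) v =
      Function.update ((fun v => AAux k r parent col (depth v) v) (parent v)) (col v)
        (some v) := by
    intro v hv
    show AAux k r parent col (depth v) v = _
    rw [hpdep v hv]
    show (if v = r then (fun i => if i = 0 then some v else none)
      else Function.update (AAux k r parent col (depth (parent v)) (parent v)) (col v)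
        (some v)) = _
    rw [if_neg hv]
  obtain ⟨G, ⟨iso⟩⟩ := core hk T r parent depth col
    (fun v => AAux k r parent col (depth v) v)
    hd0 hdr hpdep hpadj hadjchar hcol0 hproper hsib hAr hAv
  set e := Fintype.equivFin (V ⊕ Fin (k + 1)) with he
  set H : SimpleGraph (Fin (Fintype.card (V ⊕ Fin (k + 1)))) :=
    { Adj := fun x y => G.Adj (e.symm x) (e.symm y)
      symm := ⟨fun x y (hxy : G.Adj (e.symm x) (e.symm y)) => hxy.symm⟩
      loopless := ⟨fun x hx => G.loopless.irrefl _ hx⟩ } with hH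
  have hPres : ∀ u v, H.Adj (e u) (e v) ↔ G.Adj u v := by
    intro u v
    show G.Adj (e.symm (e u)) (e.symm (e v)) ↔ G.Adj u v
    rw [Equiv.symm_apply_apply, Equiv.symm_apply_apply]
  obtain ⟨iso1⟩ := TS_transport e G H hPres (k + 1)
  exact ⟨Fintype.card (V ⊕ Fin (k + 1)), H, ⟨iso1.trans iso⟩⟩
end
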